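/- arXiv:2010.15527 — 8 statements merged into one kernel-verified Lean document; each statement's English description precedes it below -/
import Mathlib

section
/- Let L be a pairwise loss function that is Lipschitz continuous with constant |L|₁, let P be a Borel probability measure on X×Y, let λ > 0, and suppose f_{L*,P,λ} ∈ H is a minimizer of the regularized shifted risk over H. Then: (i) λ‖f_{L*,P,λ}‖²_H ≤ −R_{L*,P}(f̂_{L*,P,λ}) ≤ R_{L,P}(0), where R_{L,P}(0) is the risk of the zero function; (ii) λ‖f_{L*,P,λ}‖²_H ≤ |L|₁ · ∫ |f̂_{L*,P,λ}| d(P⊗P); (iii) if moreover ‖k‖_∞ := sup_{(x,x')} ‖Φ(x,x')‖_H < ∞, then sup_{(x,x')} |f̂_{L*,P,λ}(x,x')| ≤ λ⁻¹·|L|₁·‖k‖²_∞ and |R_{L*,P}(f̂_{L*,P,λ})| ≤ λ⁻¹·|L|₁²·‖k‖²_∞. -/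
open MeasureTheory

/-- The function on `X × X` induced by an element `f` of the RKHS with feature map `Φ`:
`f̂(x,x') = ⟪f, Φ(x,x')⟫_H` (reproducing property). -/
noncomputable def fhat {X H : Type*} [NormedAddCommGroup H] [InnerProductSpace ℝ H]
    (Φ : X × X → H) (f : H) : X × X → ℝ :=
  fun p => @inner ℝ H _ f (Φ p)

/-- The shifted risk `R_{L*,P}(f) = ∫ L(x,y,x',y',f(x,x')) - L(x,y,x',y',0) d(P⊗P)`. -/
noncomputable def shiftedRisk {X Y : Type*} [MeasurableSpace X] [MeasurableSpace Y]
    (L : X → Y → X → Y → ℝ → ℝ) (P : Measure (X × Y)) (f : X × X → ℝ) : ℝ :=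
  ∫ z : (X × Y) × (X × Y),
    (L z.1.1 z.1.2 z.2.1 z.2.2 (f (z.1.1, z.2.1)) - L z.1.1 z.1.2 z.2.1 z.2.2 0) ∂(P.prod P)

/-- The regularized shifted risk `R^reg_{L*,P,λ}(f) = R_{L*,P}(f̂) + λ‖f‖²` for `f ∈ H`. -/
noncomputable def regRisk {X Y H : Type*} [MeasurableSpace X] [MeasurableSpace Y]
    [NormedAddCommGroup H] [InnerProductSpace ℝ H]
    (L : X → Y → X → Y → ℝ → ℝ) (Φ : X × X → H) (P : Measure (X × Y))
    (lam : ℝ) (f : H) : ℝ :=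
  shiftedRisk L P (fhat Φ f) + lam * ‖f‖ ^ 2

/-- **Inequalities for the regularized minimizer** (Lemma 2.12 (iv)). Let `L` be Lipschitz
with constant `|L|₁ = c`, `λ > 0` and let `f_P` minimize the regularized shifted risk over `H`.
Then (i) `λ‖f_P‖² ≤ -R_{L*,P}(f̂_P) ≤ R_{L,P}(0)`;
(ii) `λ‖f_P‖² ≤ |L|₁ ∫ |f̂_P| d(P⊗P)`;
(iii) if `‖Φ(x,x')‖ ≤ ‖k‖_∞ < ∞` for all `(x,x')`, then
`‖f̂_P‖_∞ ≤ λ⁻¹ |L|₁ ‖k‖_∞²` and `|R_{L*,P}(f̂_P)| ≤ λ⁻¹ |L|₁² ‖k‖_∞²`. -/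
theorem regularized_minimizer_inequalities
    {X Y H : Type*} [MeasurableSpace X] [MeasurableSpace Y]
    [NormedAddCommGroup H] [InnerProductSpace ℝ H] [CompleteSpace H]
    [MeasurableSpace H] [BorelSpace H]
    (L : X → Y → X → Y → ℝ → ℝ)
    (hL_meas : Measurable fun p : (X × Y) × (X × Y) × ℝ => L p.1.1 p.1.2 p.2.1.1 p.2.1.2 p.2.2)
    (hL_nonneg : ∀ x y x' y' t, 0 ≤ L x y x' y' t)
    (c : ℝ) (hc : 0 ≤ c)
    (hL_lip : ∀ x y x' y' s t, |L x y x' y' t - L x y x' y' s| ≤ c * |t - s|)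
    (Φ : X × X → H) (hΦ : Measurable Φ)
    (P : Measure (X × Y)) [IsProbabilityMeasure P]
    (lam : ℝ) (hlam : 0 < lam)
    (hint : ∀ g : H, Integrable (fun z : (X × Y) × (X × Y) => fhat Φ g (z.1.1, z.2.1)) (P.prod P))
    (fP : H) (hfP : ∀ g : H, regRisk L Φ P lam fP ≤ regRisk L Φ P lam g) :
    (lam * ‖fP‖ ^ 2 ≤ -(shiftedRisk L P (fhat Φ fP))
      ∧ ENNReal.ofReal (-(shiftedRisk L P (fhat Φ fP)))
          ≤ ∫⁻ z : (X × Y) × (X × Y), ENNReal.ofReal (L z.1.1 z.1.2 z.2.1 z.2.2 0) ∂(P.prod P))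
    ∧ (lam * ‖fP‖ ^ 2 ≤ c * ∫ z : (X × Y) × (X × Y), |fhat Φ fP (z.1.1, z.2.1)| ∂(P.prod P))
    ∧ (∀ kb : ℝ, (∀ p : X × X, ‖Φ p‖ ≤ kb) →
        (∀ p : X × X, |fhat Φ fP p| ≤ lam⁻¹ * c * kb ^ 2)
        ∧ |shiftedRisk L P (fhat Φ fP)| ≤ lam⁻¹ * c ^ 2 * kb ^ 2) := by
  classical
  set μ := P.prod P with hμ
  set g : (X × Y) × (X × Y) → ℝ := fun z => fhat Φ fP (z.1.1, z.2.1) with hgdef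
  set D : (X × Y) × (X × Y) → ℝ :=
    fun z => L z.1.1 z.1.2 z.2.1 z.2.2 (g z) - L z.1.1 z.1.2 z.2.1 z.2.2 0 with hDdef
  have hSR : shiftedRisk L P (fhat Φ fP) = ∫ z, D z ∂μ := rfl
  -- measurability
  have hm_fhat : Measurable (fhat Φ fP) :=
    (continuous_const.inner continuous_id).measurable.comp hΦ
  have hm_g : Measurable g :=
    hm_fhat.comp ((measurable_fst.fst).prodMk (measurable_snd.fst))
  have hm_Lg : Measurable fun z : (X × Y) × (X × Y) =>
      L z.1.1 z.1.2 z.2.1 z.2.2 (g z) :=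
    hL_meas.comp (measurable_fst.prodMk (measurable_snd.prodMk hm_g))
  have hm_L0 : Measurable fun z : (X × Y) × (X × Y) =>
      L z.1.1 z.1.2 z.2.1 z.2.2 0 :=
    hL_meas.comp (measurable_fst.prodMk (measurable_snd.prodMk measurable_const))
  have hm_D : Measurable D := hm_Lg.sub hm_L0
  have hint_g : Integrable g μ := hint fP
  have hD_bound : ∀ z, |D z| ≤ c * |g z| := by
    intro z
    have := hL_lip z.1.1 z.1.2 z.2.1 z.2.2 0 (g z)
    simpa using this
  have hint_D : Integrable D μ := by
    refine (hint_g.abs.const_mul c).mono' hm_D.aestronglyMeasurable ?_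
    exact ae_of_all _ fun z => by simpa [Real.norm_eq_abs] using hD_bound z
  -- regRisk at 0 is 0
  have h0 : regRisk L Φ P lam 0 = 0 := by
    simp [regRisk, shiftedRisk, fhat, inner_zero_left]
  have hkey : shiftedRisk L P (fhat Φ fP) + lam * ‖fP‖ ^ 2 ≤ 0 := by
    have := hfP 0
    rw [h0] at this
    simpa [regRisk] using this
  have h1 : lam * ‖fP‖ ^ 2 ≤ -(shiftedRisk L P (fhat Φ fP)) := by linarith
  have hSR_nonpos : shiftedRisk L P (fhat Φ fP) ≤ 0 := by
    nlinarith [sq_nonneg ‖fP‖, hlam.le, mul_nonneg hlam.le (sq_nonneg ‖fP‖)]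
  -- (i) second inequality
  have h2 : ENNReal.ofReal (-(shiftedRisk L P (fhat Φ fP)))
      ≤ ∫⁻ z, ENNReal.ofReal (L z.1.1 z.1.2 z.2.1 z.2.2 0) ∂μ := by
    set E : (X × Y) × (X × Y) → ℝ := fun z => max (-D z) 0 with hEdef
    have hint_E : Integrable E μ := hint_D.neg.pos_part
    have hstep1 : -(shiftedRisk L P (fhat Φ fP)) ≤ ∫ z, E z ∂μ := by
      rw [hSR, ← integral_neg]
      exact integral_mono hint_D.neg hint_E fun z => le_max_left _ _
    refine le_trans (ENNReal.ofReal_le_ofReal hstep1) ?_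
    rw [ofReal_integral_eq_lintegral_ofReal hint_E
      (ae_of_all _ fun z => le_max_right _ _)]
    refine lintegral_mono fun z => ENNReal.ofReal_le_ofReal ?_
    have h1' : -D z ≤ L z.1.1 z.1.2 z.2.1 z.2.2 0 := by
      have := hL_nonneg z.1.1 z.1.2 z.2.1 z.2.2 (g z)
      simp only [hDdef]
      linarith
    exact max_le h1' (hL_nonneg _ _ _ _ _)
  -- (ii)
  have h3 : lam * ‖fP‖ ^ 2 ≤ c * ∫ z, |g z| ∂μ := by
    have hstep : -(shiftedRisk L P (fhat Φ fP)) ≤ ∫ z, c * |g z| ∂μ := by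
      rw [hSR, ← integral_neg]
      refine integral_mono hint_D.neg (hint_g.abs.const_mul c) fun z => ?_
      have := hD_bound z
      have := neg_abs_le (D z)
      linarith
    rw [integral_const_mul] at hstep
    linarith
  refine ⟨⟨h1, h2⟩, h3, ?_⟩
  -- (iii)
  intro kb hkb
  have hne : Nonempty (X × Y) := by
    by_contra h
    rw [not_nonempty_iff] at h
    have h1' : P Set.univ = 1 := measure_univ
    rw [Set.univ_eq_empty_iff.mpr h, measure_empty] at h1'
    exact zero_ne_one h1'
  obtain ⟨⟨x0, _⟩⟩ := hne
  have hkb0 : 0 ≤ kb := le_trans (norm_nonneg _) (hkb (x0, x0))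
  -- pointwise bound on fhat by ‖fP‖ * kb
  have hptw : ∀ p : X × X, |fhat Φ fP p| ≤ ‖fP‖ * kb := by
    intro p
    calc |fhat Φ fP p| ≤ ‖fP‖ * ‖Φ p‖ := by
          simpa [fhat] using abs_real_inner_le_norm fP (Φ p)
      _ ≤ ‖fP‖ * kb := mul_le_mul_of_nonneg_left (hkb p) (norm_nonneg _)
  -- norm bound on fP
  have hnorm : ‖fP‖ ≤ lam⁻¹ * c * kb := by
    have hintbound : ∫ z, |g z| ∂μ ≤ ‖fP‖ * kb := by
      have : ∫ z, |g z| ∂μ ≤ ∫ _z, ‖fP‖ * kb ∂μ :=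
        integral_mono hint_g.abs (integrable_const _) fun z => hptw _
      simpa [measure_univ] using this
    have h4 : lam * ‖fP‖ ^ 2 ≤ c * (‖fP‖ * kb) :=
      le_trans h3 (mul_le_mul_of_nonneg_left hintbound hc)
    rcases eq_or_lt_of_le (norm_nonneg fP) with h | h
    · rw [← h]
      positivity
    · have h5 : lam * ‖fP‖ ≤ c * kb := by nlinarith
      have h6 := mul_le_mul_of_nonneg_left h5 (inv_nonneg.mpr hlam.le)
      rw [← mul_assoc, inv_mul_cancel₀ hlam.ne', one_mul] at h6
      calc ‖fP‖ ≤ lam⁻¹ * (c * kb) := h6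
        _ = lam⁻¹ * c * kb := by ring
  have hptw2 : ∀ p : X × X, |fhat Φ fP p| ≤ lam⁻¹ * c * kb ^ 2 := by
    intro p
    refine le_trans (hptw p) ?_
    have : ‖fP‖ * kb ≤ (lam⁻¹ * c * kb) * kb :=
      mul_le_mul_of_nonneg_right hnorm hkb0
    calc ‖fP‖ * kb ≤ (lam⁻¹ * c * kb) * kb := this
      _ = lam⁻¹ * c * kb ^ 2 := by ring
  refine ⟨hptw2, ?_⟩
  -- |SR| bound
  have habs : |shiftedRisk L P (fhat Φ fP)| ≤ ∫ z, c * |g z| ∂μ := by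
    rw [hSR]
    refine le_trans ?_ (integral_mono hint_D.abs (hint_g.abs.const_mul c)
      fun z => hD_bound z)
    simpa [Real.norm_eq_abs] using norm_integral_le_integral_norm (μ := μ) D
  have hintbound2 : ∫ z, c * |g z| ∂μ ≤ c * (lam⁻¹ * c * kb ^ 2) := by
    have : ∫ z, c * |g z| ∂μ ≤ ∫ _z, c * (lam⁻¹ * c * kb ^ 2) ∂μ := by
      refine integral_mono (hint_g.abs.const_mul c) (integrable_const _) fun z => ?_
      exact mul_le_mul_of_nonneg_left (hptw2 _) hc
    simpa [measure_univ] using this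
  calc |shiftedRisk L P (fhat Φ fP)| ≤ c * (lam⁻¹ * c * kb ^ 2) :=
        le_trans habs hintbound2
    _ = lam⁻¹ * c ^ 2 * kb ^ 2 := by ring
end

section
/- Let L be a pairwise loss function such that t ↦ L(x,y,x',y',t) is convex for every (x,y,x',y'), and suppose L is Lipschitz continuous with constant |L|₁ and that f̂ ∈ L¹(P_X ⊗ P_X) for every f ∈ H. Then for every λ > 0 there exists at most one minimizer of the regularized shifted risk R^reg_{L*,P,λ} over H; i.e., if f₁, f₂ ∈ H both minimize R^reg_{L*,P,λ}, then f₁ = f₂. -/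
open MeasureTheory

/-- **Uniqueness of the regularized minimizer.** If `L` is convex in its fifth argument,
Lipschitz continuous, and `f̂ ∈ L¹(P_X ⊗ P_X)` for every `f ∈ H`, then for every `λ > 0`
there is at most one minimizer of the regularized shifted risk over `H`. -/
theorem regularized_minimizer_unique
    {X Y H : Type*} [MeasurableSpace X] [MeasurableSpace Y]
    [NormedAddCommGroup H] [InnerProductSpace ℝ H] [CompleteSpace H]
    [MeasurableSpace H] [BorelSpace H]
    (L : X → Y → X → Y → ℝ → ℝ)
    (hL_meas : Measurable fun p : (X × Y) × (X × Y) × ℝ => L p.1.1 p.1.2 p.2.1.1 p.2.1.2 p.2.2)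
    (hL_nonneg : ∀ x y x' y' t, 0 ≤ L x y x' y' t)
    (hL_convex : ∀ x y x' y', ConvexOn ℝ Set.univ (L x y x' y'))
    (c : ℝ) (hc : 0 ≤ c)
    (hL_lip : ∀ x y x' y' s t, |L x y x' y' t - L x y x' y' s| ≤ c * |t - s|)
    (Φ : X × X → H) (hΦ : Measurable Φ)
    (P : Measure (X × Y)) [IsProbabilityMeasure P]
    (hint : ∀ f : H, Integrable (fhat Φ f) ((P.map Prod.fst).prod (P.map Prod.fst)))
    (lam : ℝ) (hlam : 0 < lam)
    (f₁ f₂ : H)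
    (hf₁ : ∀ g : H, regRisk L Φ P lam f₁ ≤ regRisk L Φ P lam g)
    (hf₂ : ∀ g : H, regRisk L Φ P lam f₂ ≤ regRisk L Φ P lam g) :
    f₁ = f₂ := by
  classical
  set m : H := (1/2 : ℝ) • f₁ + (1/2 : ℝ) • f₂ with hm
  -- measurability of fhat
  have hfhat_meas : ∀ f : H, Measurable (fhat Φ f) := fun f =>
    ((continuous_const.inner continuous_id).measurable).comp hΦ
  -- integrability of fhat pulled back to (P.prod P)
  have hπ : Measurable (Prod.map (Prod.fst : X × Y → X) (Prod.fst : X × Y → X)) :=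
    measurable_fst.prodMap measurable_fst
  have hmap : (P.map Prod.fst).prod (P.map Prod.fst)
      = (P.prod P).map (Prod.map Prod.fst Prod.fst) :=
    Measure.map_prod_map P P measurable_fst measurable_fst
  have hint' : ∀ f : H,
      Integrable (fun z : (X × Y) × (X × Y) => fhat Φ f (z.1.1, z.2.1)) (P.prod P) := by
    intro f
    have h := hint f
    rw [hmap] at h
    exact (integrable_map_measure ((hfhat_meas f).aestronglyMeasurable) hπ.aemeasurable).mp h
  -- the shifted integrand
  set G : H → ((X × Y) × (X × Y)) → ℝ := fun f z =>
    L z.1.1 z.1.2 z.2.1 z.2.2 (fhat Φ f (z.1.1, z.2.1)) - L z.1.1 z.1.2 z.2.1 z.2.2 0 with hG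
  have hGmeas : ∀ f : H, Measurable (G f) := by
    intro f
    have h1 : Measurable fun z : (X × Y) × (X × Y) =>
        L z.1.1 z.1.2 z.2.1 z.2.2 (fhat Φ f (z.1.1, z.2.1)) :=
      hL_meas.comp (measurable_fst.prodMk (measurable_snd.prodMk
        ((hfhat_meas f).comp (measurable_fst.fst.prodMk measurable_snd.fst))))
    have h0 : Measurable fun z : (X × Y) × (X × Y) => L z.1.1 z.1.2 z.2.1 z.2.2 0 :=
      hL_meas.comp (measurable_fst.prodMk (measurable_snd.prodMk measurable_const))
    exact h1.sub h0
  have hGint : ∀ f : H, Integrable (G f) (P.prod P) := by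
    intro f
    refine Integrable.mono' (((hint' f).abs).const_mul c) (hGmeas f).aestronglyMeasurable ?_
    refine Filter.Eventually.of_forall fun z => ?_
    have := hL_lip z.1.1 z.1.2 z.2.1 z.2.2 0 (fhat Φ f (z.1.1, z.2.1))
    simpa [hG, Real.norm_eq_abs] using this
  -- pointwise convexity
  have hGconv : ∀ z, G m z ≤ (1/2) * G f₁ z + (1/2) * G f₂ z := by
    intro z
    have hmid : fhat Φ m (z.1.1, z.2.1)
        = (1/2 : ℝ) • fhat Φ f₁ (z.1.1, z.2.1) + (1/2 : ℝ) • fhat Φ f₂ (z.1.1, z.2.1) := by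
      simp [fhat, hm, inner_add_left, real_inner_smul_left, smul_eq_mul]
    have hcv := (hL_convex z.1.1 z.1.2 z.2.1 z.2.2).2
      (Set.mem_univ (fhat Φ f₁ (z.1.1, z.2.1))) (Set.mem_univ (fhat Φ f₂ (z.1.1, z.2.1)))
      (by norm_num : (0:ℝ) ≤ 1/2) (by norm_num : (0:ℝ) ≤ 1/2) (by norm_num : (1/2:ℝ) + 1/2 = 1)
    rw [← hmid] at hcv
    simp only [hG, smul_eq_mul] at hcv ⊢
    linarith
  -- integral comparison
  have hS : shiftedRisk L P (fhat Φ m)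
      ≤ (1/2) * shiftedRisk L P (fhat Φ f₁) + (1/2) * shiftedRisk L P (fhat Φ f₂) := by
    have h1 : shiftedRisk L P (fhat Φ m) = ∫ z, G m z ∂(P.prod P) := rfl
    have h2 : shiftedRisk L P (fhat Φ f₁) = ∫ z, G f₁ z ∂(P.prod P) := rfl
    have h3 : shiftedRisk L P (fhat Φ f₂) = ∫ z, G f₂ z ∂(P.prod P) := rfl
    rw [h1, h2, h3]
    calc ∫ z, G m z ∂(P.prod P)
        ≤ ∫ z, ((1/2) * G f₁ z + (1/2) * G f₂ z) ∂(P.prod P) :=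
          integral_mono (hGint m)
            (((hGint f₁).const_mul _).add ((hGint f₂).const_mul _)) hGconv
      _ = (1/2) * ∫ z, G f₁ z ∂(P.prod P) + (1/2) * ∫ z, G f₂ z ∂(P.prod P) := by
          rw [integral_add ((hGint f₁).const_mul _) ((hGint f₂).const_mul _),
            integral_const_mul, integral_const_mul]
  -- norm identity
  have hnorm : ‖m‖ ^ 2
      = (1/2) * ‖f₁‖ ^ 2 + (1/2) * ‖f₂‖ ^ 2 - (1/4) * ‖f₁ - f₂‖ ^ 2 := by
    have hp := parallelogram_law_with_norm ℝ f₁ f₂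
    have hms : ‖m‖ = (1/2 : ℝ) * ‖f₁ + f₂‖ := by
      rw [hm, ← smul_add, norm_smul]
      simp
    rw [hms]
    nlinarith [hp]
  -- conclude
  have hr : regRisk L Φ P lam f₁ = regRisk L Φ P lam f₂ := le_antisymm (hf₁ f₂) (hf₂ f₁)
  have hmle := hf₁ m
  have hexp : regRisk L Φ P lam m
      ≤ regRisk L Φ P lam f₁ - lam * ((1/4) * ‖f₁ - f₂‖ ^ 2) := by
    have e1 : regRisk L Φ P lam m = shiftedRisk L P (fhat Φ m) + lam * ‖m‖ ^ 2 := rfl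
    have e2 : regRisk L Φ P lam f₁ = shiftedRisk L P (fhat Φ f₁) + lam * ‖f₁‖ ^ 2 := rfl
    have e3 : regRisk L Φ P lam f₂ = shiftedRisk L P (fhat Φ f₂) + lam * ‖f₂‖ ^ 2 := rfl
    rw [e1, e2, hnorm]
    rw [e2, e3] at hr
    nlinarith [hS]
  have hsq : ‖f₁ - f₂‖ ^ 2 ≤ 0 := by nlinarith
  have h0 : ‖f₁ - f₂‖ = 0 := by nlinarith [sq_nonneg ‖f₁ - f₂‖, norm_nonneg (f₁ - f₂)]
  exact sub_eq_zero.mp (norm_eq_zero.mp h0)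
end

section
/- Let L be a pairwise loss function that is Lipschitz continuous with constant |L|₁ and such that t ↦ L(x,y,x',y',t) is convex for every (x,y,x',y'). Let Φ : X×X → H be measurable with ‖k‖_∞ := sup_{(x,x')} ‖Φ(x,x')‖_H < ∞, and let P be a Borel probability measure on X×Y. Then for every λ > 0 there exists a minimizer f_{L*,P,λ} ∈ H of the regularized shifted risk R^reg_{L*,P,λ} over H. -/
open MeasureTheory

/-- **Existence of the regularized minimizer** (convex case). If `L` is Lipschitz continuous
and convex in its fifth argument and the kernel is bounded
(`‖Φ(x,x')‖ ≤ ‖k‖_∞ = kb < ∞` for all `(x,x')`), then for every `λ > 0` there exists a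
minimizer of the regularized shifted risk over `H`. -/
theorem regularized_minimizer_exists
    {X Y H : Type*} [MeasurableSpace X] [MeasurableSpace Y]
    [NormedAddCommGroup H] [InnerProductSpace ℝ H] [CompleteSpace H]
    [MeasurableSpace H] [BorelSpace H]
    (L : X → Y → X → Y → ℝ → ℝ)
    (hL_meas : Measurable fun p : (X × Y) × (X × Y) × ℝ => L p.1.1 p.1.2 p.2.1.1 p.2.1.2 p.2.2)
    (hL_nonneg : ∀ x y x' y' t, 0 ≤ L x y x' y' t)
    (hL_convex : ∀ x y x' y', ConvexOn ℝ Set.univ (L x y x' y'))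
    (c : ℝ) (hc : 0 ≤ c)
    (hL_lip : ∀ x y x' y' s t, |L x y x' y' t - L x y x' y' s| ≤ c * |t - s|)
    (Φ : X × X → H) (hΦ : Measurable Φ)
    (kb : ℝ) (hkb : ∀ p : X × X, ‖Φ p‖ ≤ kb)
    (P : Measure (X × Y)) [IsProbabilityMeasure P]
    (lam : ℝ) (hlam : 0 < lam) :
    ∃ f : H, ∀ g : H, regRisk L Φ P lam f ≤ regRisk L Φ P lam g := by
  classical
  -- nonemptiness of X × Y, hence kb ≥ 0
  have hne : Nonempty (X × Y) := by
    by_contra h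
    rw [not_nonempty_iff] at h
    have h1 := measure_univ (μ := P)
    rw [Set.univ_eq_empty_iff.mpr h, measure_empty] at h1
    exact zero_ne_one h1
  obtain ⟨⟨x0, y0⟩⟩ := hne
  have hkb0 : 0 ≤ kb := le_trans (norm_nonneg _) (hkb (x0, x0))
  set B : ℝ := c * kb with hBdef
  have hB0 : 0 ≤ B := mul_nonneg hc hkb0
  -- the integrand
  set ℓ : H → ((X × Y) × (X × Y)) → ℝ := fun f z =>
    L z.1.1 z.1.2 z.2.1 z.2.2 (@inner ℝ H _ f (Φ (z.1.1, z.2.1))) - L z.1.1 z.1.2 z.2.1 z.2.2 0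
    with hℓdef
  set G : H → ℝ := fun f => (∫ z, ℓ f z ∂(P.prod P)) + lam * ‖f‖ ^ 2 with hGdef
  have hGeq : ∀ f : H, regRisk L Φ P lam f = G f := fun f => rfl
  -- measurability of the integrand
  have hψ : ∀ f : H, Measurable fun z : (X × Y) × (X × Y) =>
      (@inner ℝ H _ f (Φ (z.1.1, z.2.1)) : ℝ) := by
    intro f
    have h1 : Measurable fun z : (X × Y) × (X × Y) => Φ (z.1.1, z.2.1) :=
      hΦ.comp (measurable_fst.fst.prodMk measurable_snd.fst)
    have h2 : Continuous fun v : H => (@inner ℝ H _ f v : ℝ) := (innerSL ℝ f).continuous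
    exact h2.measurable.comp h1
  have hmeasℓ : ∀ f : H, Measurable (ℓ f) := by
    intro f
    have h1 : Measurable fun z : (X × Y) × (X × Y) =>
        L z.1.1 z.1.2 z.2.1 z.2.2 (@inner ℝ H _ f (Φ (z.1.1, z.2.1))) :=
      hL_meas.comp (measurable_fst.prodMk (measurable_snd.prodMk (hψ f)))
    have h2 : Measurable fun z : (X × Y) × (X × Y) => L z.1.1 z.1.2 z.2.1 z.2.2 0 :=
      hL_meas.comp (measurable_fst.prodMk (measurable_snd.prodMk measurable_const))
    exact h1.sub h2
  -- pointwise Lipschitz estimate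
  have hlip_pt : ∀ (f g : H) (z : (X × Y) × (X × Y)), |ℓ f z - ℓ g z| ≤ B * ‖f - g‖ := by
    intro f g z
    have h1 : ℓ f z - ℓ g z =
        L z.1.1 z.1.2 z.2.1 z.2.2 (@inner ℝ H _ f (Φ (z.1.1, z.2.1))) -
        L z.1.1 z.1.2 z.2.1 z.2.2 (@inner ℝ H _ g (Φ (z.1.1, z.2.1))) := by
      simp only [hℓdef]; ring
    rw [h1]
    calc _ ≤ c * |(@inner ℝ H _ f (Φ (z.1.1, z.2.1))) - (@inner ℝ H _ g (Φ (z.1.1, z.2.1)))| :=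
          hL_lip _ _ _ _ _ _
      _ = c * |(@inner ℝ H _ (f - g) (Φ (z.1.1, z.2.1)))| := by rw [inner_sub_left]
      _ ≤ c * (‖f - g‖ * ‖Φ (z.1.1, z.2.1)‖) :=
          mul_le_mul_of_nonneg_left (abs_real_inner_le_norm _ _) hc
      _ ≤ c * (‖f - g‖ * kb) := by
          apply mul_le_mul_of_nonneg_left _ hc
          exact mul_le_mul_of_nonneg_left (hkb _) (norm_nonneg _)
      _ = B * ‖f - g‖ := by rw [hBdef]; ring
  have hℓzero : ∀ z, ℓ 0 z = 0 := by intro z; simp [hℓdef]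
  have hbd : ∀ (f : H) (z : (X × Y) × (X × Y)), |ℓ f z| ≤ B * ‖f‖ := by
    intro f z
    have := hlip_pt f 0 z
    simpa [hℓzero z] using this
  -- integrability
  have hint : ∀ f : H, Integrable (ℓ f) (P.prod P) := by
    intro f
    exact Integrable.mono' (integrable_const (B * ‖f‖)) (hmeasℓ f).aestronglyMeasurable
      (Filter.Eventually.of_forall fun z => by simpa using hbd f z)
  -- Lipschitz estimate for the risk
  have hLip : ∀ f g : H,
      |(∫ z, ℓ f z ∂(P.prod P)) - ∫ z, ℓ g z ∂(P.prod P)| ≤ B * ‖f - g‖ := by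
    intro f g
    rw [← integral_sub (hint f) (hint g)]
    have h := norm_integral_le_of_norm_le_const (μ := P.prod P)
      (f := fun z => ℓ f z - ℓ g z) (C := B * ‖f - g‖)
      (Filter.Eventually.of_forall fun z => by simpa using hlip_pt f g z)
    simpa [measure_univ] using h
  -- R 0 = 0
  have hR0 : (∫ z, ℓ 0 z ∂(P.prod P)) = 0 := by
    rw [show ℓ 0 = fun _ => (0 : ℝ) from funext hℓzero, integral_zero]
  -- lower bound
  set lb : ℝ := -(B ^ 2 / (4 * lam)) with hlbdef
  have hGlb : ∀ f : H, lb ≤ G f := by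
    intro f
    have h1 := hLip f 0
    rw [hR0, sub_zero, sub_zero] at h1
    have h2 : -(B * ‖f‖) ≤ ∫ z, ℓ f z ∂(P.prod P) := (abs_le.mp h1).1
    have h4 : (0 : ℝ) < 4 * lam := by linarith
    have hx : -(B ^ 2) ≤ (lam * ‖f‖ ^ 2 - B * ‖f‖) * (4 * lam) := by
      nlinarith [sq_nonneg (2 * lam * ‖f‖ - B)]
    have h5 : -(B ^ 2) / (4 * lam) ≤ lam * ‖f‖ ^ 2 - B * ‖f‖ := (div_le_iff₀ h4).mpr hx
    rw [neg_div] at h5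
    have : lb ≤ lam * ‖f‖ ^ 2 - B * ‖f‖ := h5
    simp only [hGdef]
    linarith
  -- midpoint strong convexity
  have hmid : ∀ f g : H,
      G ((1 / 2 : ℝ) • (f + g)) ≤ (G f + G g) / 2 - (lam / 4) * ‖f - g‖ ^ 2 := by
    intro f g
    -- pointwise convexity of the integrand
    have hpt : ∀ z, ℓ ((1 / 2 : ℝ) • (f + g)) z ≤ (1 / 2) * ℓ f z + (1 / 2) * ℓ g z := by
      intro z
      have hin : (@inner ℝ H _ ((1 / 2 : ℝ) • (f + g)) (Φ (z.1.1, z.2.1)) : ℝ) =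
          (1 / 2 : ℝ) * (@inner ℝ H _ f (Φ (z.1.1, z.2.1))) +
          (1 / 2 : ℝ) * (@inner ℝ H _ g (Φ (z.1.1, z.2.1))) := by
        rw [real_inner_smul_left, inner_add_left]; ring
      have hcv := (hL_convex z.1.1 z.1.2 z.2.1 z.2.2).2 (Set.mem_univ
          (@inner ℝ H _ f (Φ (z.1.1, z.2.1)))) (Set.mem_univ
          (@inner ℝ H _ g (Φ (z.1.1, z.2.1)))) (by norm_num : (0:ℝ) ≤ 1/2)
          (by norm_num : (0:ℝ) ≤ 1/2) (by norm_num)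
      simp only [smul_eq_mul] at hcv
      simp only [hℓdef, hin]
      linarith
    have hmono : (∫ z, ℓ ((1 / 2 : ℝ) • (f + g)) z ∂(P.prod P)) ≤
        ∫ z, ((1 / 2) * ℓ f z + (1 / 2) * ℓ g z) ∂(P.prod P) := by
      refine integral_mono (hint _) ?_ hpt
      exact ((hint f).const_mul _).add ((hint g).const_mul _)
    have hadd : (∫ z, ((1 / 2) * ℓ f z + (1 / 2) * ℓ g z) ∂(P.prod P)) =
        (1 / 2) * (∫ z, ℓ f z ∂(P.prod P)) + (1 / 2) * (∫ z, ℓ g z ∂(P.prod P)) := by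
      rw [integral_add ((hint f).const_mul _) ((hint g).const_mul _)]
      simp [integral_const_mul]
    -- norm identity
    have hnorm : ‖(1 / 2 : ℝ) • (f + g)‖ ^ 2 =
        (‖f‖ ^ 2 + ‖g‖ ^ 2) / 2 - ‖f - g‖ ^ 2 / 4 := by
      have h1 : ‖(1 / 2 : ℝ) • (f + g)‖ ^ 2 = (1 / 4) * ‖f + g‖ ^ 2 := by
        rw [norm_smul, mul_pow, Real.norm_eq_abs]
        norm_num
      rw [h1, norm_add_sq_real, norm_sub_sq_real]
      ring
    simp only [hGdef]
    rw [hnorm]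
    have := hmono.trans_eq hadd
    linarith
  -- infimum
  set m : ℝ := sInf (Set.range G) with hmdef
  have hbddb : BddBelow (Set.range G) := ⟨lb, by rintro _ ⟨f, rfl⟩; exact hGlb f⟩
  have hrne : (Set.range G).Nonempty := ⟨G 0, 0, rfl⟩
  have hmle : ∀ f : H, m ≤ G f := fun f => csInf_le hbddb ⟨f, rfl⟩
  -- minimizing sequence
  have hseq : ∀ n : ℕ, ∃ f : H, G f < m + 1 / (n + 1) := by
    intro n
    have hpos : (0 : ℝ) < 1 / (n + 1) := by positivity
    obtain ⟨y, ⟨f, rfl⟩, hy⟩ := exists_lt_of_csInf_lt hrne (lt_add_of_pos_right m hpos)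
    exact ⟨f, hy⟩
  choose u hu using hseq
  -- Cauchy
  have hkey : ∀ i j : ℕ, (lam / 4) * ‖u i - u j‖ ^ 2 ≤ (G (u i) + G (u j)) / 2 - m := by
    intro i j
    have h1 := hmid (u i) (u j)
    have h2 := hmle ((1 / 2 : ℝ) • (u i + u j))
    linarith
  have hdistb : ∀ n m' N : ℕ, N ≤ n → N ≤ m' →
      dist (u n) (u m') ≤ Real.sqrt ((4 / lam) * (1 / (N + 1))) := by
    intro n m' N hn hm'
    rw [dist_eq_norm]
    rw [Real.le_sqrt (norm_nonneg _) (by positivity)]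
    have h1 := hkey n m'
    have h2 := hu n
    have h3 := hu m'
    have hn1 : (1 : ℝ) / (n + 1) ≤ 1 / (N + 1) := by
      apply one_div_le_one_div_of_le (by positivity)
      have : (N : ℝ) ≤ n := Nat.cast_le.mpr hn
      linarith
    have hm1 : (1 : ℝ) / (m' + 1) ≤ 1 / (N + 1) := by
      apply one_div_le_one_div_of_le (by positivity)
      have : (N : ℝ) ≤ m' := Nat.cast_le.mpr hm'
      linarith
    have h4 : (lam / 4) * ‖u n - u m'‖ ^ 2 ≤ 1 / (N + 1) := by linarith
    have h5 : ‖u n - u m'‖ ^ 2 ≤ (4 / lam) * (1 / (N + 1)) := by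
      rw [div_mul_eq_mul_div, le_div_iff₀ hlam]
      nlinarith
    exact h5
  have hb0 : Filter.Tendsto (fun N : ℕ => Real.sqrt ((4 / lam) * (1 / (N + 1)))) Filter.atTop
      (nhds 0) := by
    have h1 : Filter.Tendsto (fun N : ℕ => (4 / lam) * (1 / (N + 1 : ℝ))) Filter.atTop
        (nhds 0) := by
      have := tendsto_one_div_add_atTop_nhds_zero_nat.const_mul (4 / lam)
      simpa using this
    have h2 := (Real.continuous_sqrt.tendsto 0).comp h1
    simpa [Function.comp_def] using h2
  have hcauchy : CauchySeq u :=
    cauchySeq_of_le_tendsto_0 _ hdistb hb0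
  obtain ⟨fstar, hfstar⟩ := cauchySeq_tendsto_of_complete hcauchy
  -- continuity of G
  have hGcont : Continuous G := by
    have hRcont : Continuous fun f : H => ∫ z, ℓ f z ∂(P.prod P) := by
      have hlw : LipschitzWith (Real.toNNReal B) (fun f : H => ∫ z, ℓ f z ∂(P.prod P)) := by
        refine LipschitzWith.of_dist_le_mul fun f g => ?_
        rw [Real.dist_eq, dist_eq_norm, Real.coe_toNNReal _ hB0]
        exact hLip f g
      exact hlw.continuous
    exact hRcont.add (continuous_const.mul ((continuous_norm).pow 2))
  have hGlim : Filter.Tendsto (fun n => G (u n)) Filter.atTop (nhds (G fstar)) :=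
    (hGcont.tendsto fstar).comp hfstar
  have hGlim' : Filter.Tendsto (fun n => G (u n)) Filter.atTop (nhds m) := by
    have hupper : Filter.Tendsto (fun n : ℕ => m + 1 / (n + 1 : ℝ)) Filter.atTop (nhds m) := by
      have := tendsto_const_nhds (x := m) (f := Filter.atTop (α := ℕ)).add
        tendsto_one_div_add_atTop_nhds_zero_nat
      simpa using this
    exact tendsto_of_tendsto_of_tendsto_of_le_of_le tendsto_const_nhds hupper
      (fun n => hmle (u n)) (fun n => (hu n).le)
  have hm : G fstar = m := tendsto_nhds_unique hGlim hGlim'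
  exact ⟨fstar, fun g => by rw [hGeq, hGeq, hm]; exact hmle g⟩
end

section
/- Let L be a pairwise loss function that is Lipschitz continuous (not necessarily convex) and continuous in its fifth argument, let P be a Borel probability measure on X×Y, let Φ : X×X → H be measurable with ‖k‖_∞ := sup_{(x,x')} ‖Φ(x,x')‖_H < ∞, and suppose R_{L,P}(f̂₀) < ∞ for some f₀ ∈ H. Then for every λ > 0 there exists a minimizer f* ∈ H of the regularized (unshifted) risk f ↦ R_{L,P}(f̂) + λ‖f‖²_H over H. -/
open MeasureTheory ENNReal Filter Topology RealInnerProductSpace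

/-- The `[0,∞]`-valued (unshifted) `L`-risk of the function induced by `f ∈ H`. -/
noncomputable def riskENN {X Y H : Type*} [MeasurableSpace X] [MeasurableSpace Y]
    [NormedAddCommGroup H] [InnerProductSpace ℝ H]
    (L : X → Y → X → Y → ℝ → ℝ) (Φ : X × X → H) (P : Measure (X × Y)) (f : H) : ℝ≥0∞ :=
  ∫⁻ z : (X × Y) × (X × Y),
    ENNReal.ofReal (L z.1.1 z.1.2 z.2.1 z.2.2 (fhat Φ f (z.1.1, z.2.1))) ∂(P.prod P)

/-- Weak sequential compactness of bounded sequences in a real Hilbert space. -/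
theorem exists_weak_subseq {H : Type*} [NormedAddCommGroup H] [InnerProductSpace ℝ H]
    [CompleteSpace H] (f : ℕ → H) (C : ℝ) (hC : ∀ n, ‖f n‖ ≤ C) :
    ∃ (g : H) (φ : ℕ → ℕ), StrictMono φ ∧
      ∀ v : H, Tendsto (fun k => ⟪f (φ k), v⟫) atTop (𝓝 ⟪g, v⟫) := by
  have hC0 : 0 ≤ C := (norm_nonneg (f 0)).trans (hC 0)
  -- diagonal extraction via compactness of a countable product of intervals
  have hcomp : IsCompact (Set.pi Set.univ fun _ : ℕ => Set.Icc (-(C * C)) (C * C)) :=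
    isCompact_univ_pi fun _ => isCompact_Icc
  have hmem : ∀ n, (fun m => ⟪f n, f m⟫) ∈ Set.pi Set.univ fun _ : ℕ => Set.Icc (-(C*C)) (C*C) := by
    intro n m _
    have := abs_real_inner_le_norm (f n) (f m)
    have hb : |⟪f n, f m⟫| ≤ C * C :=
      this.trans (mul_le_mul (hC n) (hC m) (norm_nonneg _) hC0)
    exact ⟨neg_le_of_abs_le hb, le_of_abs_le hb⟩
  obtain ⟨a, -, φ, hφ, ha⟩ := hcomp.tendsto_subseq hmem
  have ha' : ∀ m, Tendsto (fun k => ⟪f (φ k), f m⟫) atTop (𝓝 (a m)) := by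
    intro m
    have := tendsto_pi_nhds.1 ha m
    simpa using this
  set g : ℕ → H := fun k => f (φ k) with hg
  -- convergence on the span
  have hspan : ∀ v ∈ Submodule.span ℝ (Set.range f),
      ∃ Lv : ℝ, Tendsto (fun k => ⟪g k, v⟫) atTop (𝓝 Lv) := by
    intro v hv
    induction hv using Submodule.span_induction with
    | mem x hx =>
      obtain ⟨m, rfl⟩ := hx
      exact ⟨a m, ha' m⟩
    | zero => exact ⟨0, by simpa using tendsto_const_nhds⟩
    | add x y _ _ hx hy =>
      obtain ⟨Lx, hLx⟩ := hx; obtain ⟨Ly, hLy⟩ := hy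
      exact ⟨Lx + Ly, by simpa [inner_add_right] using hLx.add hLy⟩
    | smul c x _ hx =>
      obtain ⟨Lx, hLx⟩ := hx
      exact ⟨c * Lx, by simpa [inner_smul_right] using hLx.const_mul c⟩
  -- convergence everywhere
  set V : Submodule ℝ H := (Submodule.span ℝ (Set.range f)).topologicalClosure with hV
  haveI : CompleteSpace V := IsClosed.completeSpace_coe (hs :=
    (Submodule.isClosed_topologicalClosure _))
  have hgV : ∀ k, g k ∈ V :=
    fun k => (Submodule.span ℝ (Set.range f)).le_topologicalClosure
      (Submodule.subset_span ⟨φ k, rfl⟩)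
  have hconv : ∀ v : H, ∃ Lv : ℝ, Tendsto (fun k => ⟪g k, v⟫) atTop (𝓝 Lv) := by
    intro v
    have hdecomp : ∀ k, ⟪g k, v⟫ = ⟪g k, (V.orthogonalProjection v : H)⟫ := by
      intro k
      have horth : v - (V.orthogonalProjection v : H) ∈ Vᗮ :=
        V.sub_starProjection_mem_orthogonal v
      have h0 : ⟪g k, v - (V.orthogonalProjection v : H)⟫ = 0 :=
        (Submodule.mem_orthogonal V _).1 horth _ (hgV k)
      have := inner_sub_right (𝕜 := ℝ) (g k) v ((V.orthogonalProjection v : H))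
      rw [this] at h0
      linarith
    set w : H := (V.orthogonalProjection v : H) with hw
    have hwV : w ∈ V := (V.orthogonalProjection v).2
    -- Cauchy via approximation from the span
    have hcauchy : CauchySeq fun k => ⟪g k, w⟫ := by
      rw [Metric.cauchySeq_iff]
      intro ε hε
      have hC1 : (0:ℝ) < C + 1 := by linarith
      have hδ : (0:ℝ) < ε / (3 * (C + 1)) := by positivity
      have hwcl : w ∈ closure ((Submodule.span ℝ (Set.range f) : Submodule ℝ H) : Set H) := hwV
      obtain ⟨w', hw'mem, hw'c⟩ := SeminormedAddCommGroup.mem_closure_iff.1 hwcl _ hδ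
      obtain ⟨Lw, hLw⟩ := hspan w' hw'mem
      have hLwC : CauchySeq fun k => ⟪g k, w'⟫ := hLw.cauchySeq
      rw [Metric.cauchySeq_iff] at hLwC
      obtain ⟨N, hN⟩ := hLwC (ε / 3) (by positivity)
      refine ⟨N, fun m hm n hn => ?_⟩
      have key : ∀ k, |⟪g k, w⟫ - ⟪g k, w'⟫| ≤ ε / 3 := by
        intro k
        have : ⟪g k, w⟫ - ⟪g k, w'⟫ = ⟪g k, w - w'⟫ := by
          rw [inner_sub_right]
        rw [this]
        have h1 : |⟪g k, w - w'⟫| ≤ ‖g k‖ * ‖w - w'‖ := abs_real_inner_le_norm _ _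
        have h2 : ‖g k‖ * ‖w - w'‖ ≤ (C + 1) * (ε / (3 * (C + 1))) := by
          apply mul_le_mul (by have := hC (φ k); linarith) hw'c.le (norm_nonneg _) (by linarith)
        have h3 : (C + 1) * (ε / (3 * (C + 1))) = ε / 3 := by
          field_simp
        linarith
      have hmn := hN m hm n hn
      rw [Real.dist_eq] at hmn ⊢
      have t1 := key m; have t2 := key n
      have : |⟪g m, w⟫ - ⟪g n, w⟫| ≤ |⟪g m, w⟫ - ⟪g m, w'⟫| + |⟪g m, w'⟫ - ⟪g n, w'⟫|
          + |⟪g n, w'⟫ - ⟪g n, w⟫| := by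
        have := abs_sub_le (⟪g m, w⟫) (⟪g m, w'⟫) (⟪g n, w⟫)
        have := abs_sub_le (⟪g m, w'⟫) (⟪g n, w'⟫) (⟪g n, w⟫)
        calc |⟪g m, w⟫ - ⟪g n, w⟫| ≤ |⟪g m, w⟫ - ⟪g m, w'⟫| + |⟪g m, w'⟫ - ⟪g n, w⟫| :=
              abs_sub_le _ _ _
          _ ≤ |⟪g m, w⟫ - ⟪g m, w'⟫| + (|⟪g m, w'⟫ - ⟪g n, w'⟫| + |⟪g n, w'⟫ - ⟪g n, w⟫|) := by
              gcongr
          _ = _ := by ring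
      have t3 : |⟪g n, w'⟫ - ⟪g n, w⟫| ≤ ε / 3 := by rw [abs_sub_comm]; exact key n
      linarith
    obtain ⟨Lv, hLv⟩ := cauchySeq_tendsto_of_complete hcauchy
    exact ⟨Lv, by simpa only [← hdecomp] using hLv⟩
  choose ℓ hℓ using hconv
  -- ℓ is a bounded linear functional; Riesz representation
  have hadd : ∀ v u : H, ℓ (v + u) = ℓ v + ℓ u := by
    intro v u
    refine tendsto_nhds_unique ?_ ((hℓ v).add (hℓ u))
    simpa [inner_add_right] using hℓ (v + u)
  have hsmul : ∀ (c : ℝ) (v : H), ℓ (c • v) = c * ℓ v := by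
    intro c v
    refine tendsto_nhds_unique ?_ ((hℓ v).const_mul c)
    simpa [inner_smul_right] using hℓ (c • v)
  have hbdd : ∀ v : H, |ℓ v| ≤ C * ‖v‖ := by
    intro v
    refine le_of_tendsto (hℓ v).abs (Eventually.of_forall fun k => ?_)
    exact (abs_real_inner_le_norm _ _).trans
      (mul_le_mul_of_nonneg_right (hC (φ k)) (norm_nonneg _))
  let ℓlin : H →ₗ[ℝ] ℝ :=
    { toFun := ℓ
      map_add' := hadd
      map_smul' := fun c v => by simpa using hsmul c v }
  let ℓcont : H →L[ℝ] ℝ := ℓlin.mkContinuous C fun v => by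
    simpa [ℓlin] using hbdd v
  refine ⟨(InnerProductSpace.toDual ℝ H).symm ℓcont, φ, hφ, fun v => ?_⟩
  have : ⟪(InnerProductSpace.toDual ℝ H).symm ℓcont, v⟫ = ℓcont v :=
    InnerProductSpace.toDual_symm_apply
  rw [this]
  exact hℓ v

/-- **Existence of the regularized minimizer without convexity.** If `L` is Lipschitz
continuous (and continuous in its fifth argument), the kernel is bounded, and
`R_{L,P}(f̂₀) < ∞` for some `f₀ ∈ H`, then for every `λ > 0` there exists a minimizer of the
regularized (unshifted) risk `f ↦ R_{L,P}(f̂) + λ‖f‖²` over `H`. -/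
theorem regularized_minimizer_exists_nonconvex
    {X Y H : Type*} [MeasurableSpace X] [MeasurableSpace Y]
    [NormedAddCommGroup H] [InnerProductSpace ℝ H] [CompleteSpace H]
    [MeasurableSpace H] [BorelSpace H]
    (L : X → Y → X → Y → ℝ → ℝ)
    (hL_meas : Measurable fun p : (X × Y) × (X × Y) × ℝ => L p.1.1 p.1.2 p.2.1.1 p.2.1.2 p.2.2)
    (hL_nonneg : ∀ x y x' y' t, 0 ≤ L x y x' y' t)
    (hL_cont : ∀ x y x' y', Continuous (L x y x' y'))
    (c : ℝ) (hc : 0 ≤ c)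
    (hL_lip : ∀ x y x' y' s t, |L x y x' y' t - L x y x' y' s| ≤ c * |t - s|)
    (Φ : X × X → H) (hΦ : Measurable Φ)
    (kb : ℝ) (hkb : ∀ p : X × X, ‖Φ p‖ ≤ kb)
    (P : Measure (X × Y)) [IsProbabilityMeasure P]
    (f₀ : H) (hf₀ : riskENN L Φ P f₀ < ⊤)
    (lam : ℝ) (hlam : 0 < lam) :
    ∃ f : H, ∀ g : H,
      riskENN L Φ P f + ENNReal.ofReal (lam * ‖f‖ ^ 2)
        ≤ riskENN L Φ P g + ENNReal.ofReal (lam * ‖g‖ ^ 2) := by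
  classical
  set J : H → ℝ≥0∞ := fun g => riskENN L Φ P g + ENNReal.ofReal (lam * ‖g‖ ^ 2) with hJ
  set I : ℝ≥0∞ := ⨅ g : H, J g with hI
  have hIfin : I < ⊤ :=
    lt_of_le_of_lt (iInf_le _ f₀) (ENNReal.add_lt_top.2 ⟨hf₀, ENNReal.ofReal_lt_top⟩)
  -- minimizing sequence
  have hseq : ∀ n : ℕ, ∃ g : H, J g < I + ENNReal.ofReal (1 / (n + 1)) := by
    intro n
    have hb : (ENNReal.ofReal (1 / (n + 1) : ℝ)) ≠ 0 := by
      simp [ENNReal.ofReal_eq_zero]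
      positivity
    have : I < I + ENNReal.ofReal (1 / (n + 1)) := ENNReal.lt_add_right hIfin.ne hb
    rw [hI, iInf_lt_iff] at this
    exact this
  choose fs hfs using hseq
  have hJle : ∀ n, J (fs n) ≤ I + 1 := by
    intro n
    refine (hfs n).le.trans (add_le_add_right ?_ I)
    refine ENNReal.ofReal_le_of_le_toReal ?_
    simp only [ENNReal.toReal_one]
    rw [div_le_one (by positivity)]
    linarith [Nat.cast_nonneg (α := ℝ) n]
  -- norm bound on the minimizing sequence
  set C : ℝ := Real.sqrt ((I + 1).toReal / lam) with hCdef
  have hbound : ∀ n, ‖fs n‖ ≤ C := by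
    intro n
    have h1 : ENNReal.ofReal (lam * ‖fs n‖ ^ 2) ≤ I + 1 :=
      le_trans le_add_self (hJle n)
    have h2 : lam * ‖fs n‖ ^ 2 ≤ (I + 1).toReal := by
      have := (ENNReal.toReal_le_toReal ENNReal.ofReal_ne_top (by simp [hIfin.ne])).2 h1
      rwa [ENNReal.toReal_ofReal (by positivity)] at this
    have h3 : ‖fs n‖ ^ 2 ≤ (I + 1).toReal / lam := by
      rw [le_div_iff₀ hlam]; linarith
    rw [hCdef]
    exact (Real.le_sqrt (norm_nonneg _) (by positivity)).2 h3
  -- minimizing sequence converges in value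
  have htend : Tendsto (fun n => J (fs n)) atTop (𝓝 I) := by
    have hub : Tendsto (fun n : ℕ => I + ENNReal.ofReal (1 / (n + 1))) atTop (𝓝 (I + 0)) := by
      have h0 : Tendsto (fun n : ℕ => ENNReal.ofReal (1 / (n + 1) : ℝ)) atTop (𝓝 0) := by
        simpa using ENNReal.tendsto_ofReal tendsto_one_div_add_atTop_nhds_zero_nat
      exact Tendsto.const_add I h0
    rw [add_zero] at hub
    exact tendsto_of_tendsto_of_tendsto_of_le_of_le tendsto_const_nhds hub
      (fun n => iInf_le _ (fs n)) (fun n => (hfs n).le)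
  -- weak convergence + norm convergence along a subsequence
  obtain ⟨fstar, φ, hφ, hweak⟩ := exists_weak_subseq fs C hbound
  obtain ⟨r, hrmem, ψ, hψ, hr⟩ := (isCompact_Icc (a := (0:ℝ)) (b := C)).tendsto_subseq
    (x := fun k => ‖fs (φ k)‖) (fun k => ⟨norm_nonneg _, hbound _⟩)
  set gs : ℕ → H := fun j => fs (φ (ψ j)) with hgs
  have hweak' : ∀ v : H, Tendsto (fun j => ⟪gs j, v⟫) atTop (𝓝 ⟪fstar, v⟫) :=
    fun v => (hweak v).comp (hψ.tendsto_atTop)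
  have hrn : Tendsto (fun j => ‖gs j‖) atTop (𝓝 r) := hr
  -- ‖fstar‖ ≤ r
  have hnorm : ‖fstar‖ ≤ r := by
    have h1 : Tendsto (fun j => ⟪gs j, fstar⟫) atTop (𝓝 (‖fstar‖ ^ 2)) := by
      simpa [real_inner_self_eq_norm_sq] using hweak' fstar
    have h2 : Tendsto (fun j => ‖gs j‖ * ‖fstar‖) atTop (𝓝 (r * ‖fstar‖)) :=
      hrn.mul_const _
    have h3 : ‖fstar‖ ^ 2 ≤ r * ‖fstar‖ :=
      le_of_tendsto_of_tendsto' h1 h2 fun j => real_inner_le_norm _ _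
    rcases eq_or_lt_of_le (norm_nonneg fstar) with h0 | h0
    · rw [← h0]; exact hrmem.1
    · nlinarith
  -- the combined integrand
  set G : H → ((X × Y) × (X × Y)) → ℝ≥0∞ := fun g z =>
    ENNReal.ofReal (L z.1.1 z.1.2 z.2.1 z.2.2 (fhat Φ g (z.1.1, z.2.1)))
      + ENNReal.ofReal (lam * ‖g‖ ^ 2) with hG
  have hGmeas : ∀ g : H, Measurable (G g) := by
    intro g
    apply Measurable.add_const
    apply ENNReal.measurable_ofReal.comp
    have hin : Measurable fun z : (X × Y) × (X × Y) => fhat Φ g (z.1.1, z.2.1) := by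
      have : Continuous fun h : H => ⟪g, h⟫ := continuous_const.inner continuous_id
      exact (this.measurable.comp hΦ).comp
        ((measurable_fst.fst).prodMk (measurable_snd.fst))
    have hz : Measurable fun z : (X × Y) × (X × Y) =>
        ((z.1, (z.2, fhat Φ g (z.1.1, z.2.1))) : (X × Y) × (X × Y) × ℝ) :=
      measurable_fst.prodMk (measurable_snd.prodMk hin)
    exact hL_meas.comp hz
  have hGint : ∀ g : H, ∫⁻ z, G g z ∂(P.prod P) = J g := by
    intro g
    rw [hG]
    simp only
    rw [lintegral_add_right _ measurable_const, lintegral_const]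
    simp [riskENN, hJ]
  -- lower semicontinuity via Fatou
  have hfatou : J fstar ≤ I := by
    have hpt : ∀ z : (X × Y) × (X × Y),
        G fstar z ≤ liminf (fun j => G (gs j) z) atTop := by
      intro z
      have h1 : Tendsto (fun j => fhat Φ (gs j) (z.1.1, z.2.1)) atTop
          (𝓝 (fhat Φ fstar (z.1.1, z.2.1))) := hweak' (Φ (z.1.1, z.2.1))
      have h2 : Tendsto (fun j => G (gs j) z) atTop
          (𝓝 (ENNReal.ofReal (L z.1.1 z.1.2 z.2.1 z.2.2 (fhat Φ fstar (z.1.1, z.2.1)))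
            + ENNReal.ofReal (lam * r ^ 2))) := by
        apply Tendsto.add
        · exact ENNReal.tendsto_ofReal (((hL_cont _ _ _ _).tendsto _).comp h1)
        · exact ENNReal.tendsto_ofReal ((hrn.pow 2).const_mul lam)
      rw [h2.liminf_eq]
      refine add_le_add_right ?_ _
      refine ENNReal.ofReal_le_ofReal ?_
      have : ‖fstar‖ ^ 2 ≤ r ^ 2 := by nlinarith [norm_nonneg fstar]
      nlinarith
    calc J fstar = ∫⁻ z, G fstar z ∂(P.prod P) := (hGint fstar).symm
      _ ≤ ∫⁻ z, liminf (fun j => G (gs j) z) atTop ∂(P.prod P) := lintegral_mono hpt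
      _ ≤ liminf (fun j => ∫⁻ z, G (gs j) z ∂(P.prod P)) atTop :=
          lintegral_liminf_le (fun j => hGmeas (gs j))
      _ = liminf (fun j => J (gs j)) atTop := by
          simp only [hGint]
      _ = I := by
          have : Tendsto (fun j => J (gs j)) atTop (𝓝 I) :=
            htend.comp ((hφ.comp hψ).tendsto_atTop)
          exact this.liminf_eq
  exact ⟨fstar, fun g => hfatou.trans (iInf_le _ g)⟩
end

section
/- Let L be a pairwise loss function that is Lipschitz continuous with constant |L|₁ and convex in its fifth argument, let H be a separable real Hilbert space, Φ : X×X → H measurable with ‖k‖_∞ := sup ‖Φ(x,x')‖_H < ∞, P a Borel probability measure on X×Y, λ > 0, and let f_P := f_{L*,P,λ} be the minimizer of the regularized shifted risk. Then there exists a bounded measurable function h : (X×Y)² → ℝ such that: (i) for all (x,y,x',y') and all v ∈ ℝ, h(x,y,x',y')·(v − f̂_P(x,x')) ≤ L*(x,y,x',y',v) − L*(x,y,x',y',f̂_P(x,x')) (h is a subgradient selection); (ii) f_P = −(2λ)⁻¹ ∫ h(x,y,x',y')·Φ(x,x') d(P⊗P) as a Bochner integral in H; (iii) |h(x,y,x',y')|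 ≤ |L|₁ for all (x,y,x',y'); and (iv) for every Borel probability measure Q on X×Y with minimizer f_Q := f_{L*,Q,λ}, ‖f_P − f_Q‖_H ≤ λ⁻¹ · ‖∫ h·Φ d(P⊗P) − ∫ h·Φ d(Q⊗Q)‖_H. -/
open MeasureTheory Filter Topology Set
open scoped RealInnerProductSpace


section convex1d

/-- slope of the secant of `φ` through `t0` and `v`. -/
noncomputable def rsl (φ : ℝ → ℝ) (t0 v : ℝ) : ℝ := (φ v - φ t0) / (v - t0)

/-- right derivative of a convex function at `t0` (as an inf of slopes). -/
noncomputable def Dplus (φ : ℝ → ℝ) (t0 : ℝ) : ℝ := ⨅ n : ℕ, rsl φ t0 (t0 + 1/(n+1))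

/-- left derivative. -/
noncomputable def Dminus (φ : ℝ → ℝ) (t0 : ℝ) : ℝ := ⨆ n : ℕ, rsl φ t0 (t0 - 1/(n+1))

variable {φ : ℝ → ℝ} {c t0 v w : ℝ}

lemma abs_rsl_le (hlip : ∀ s t, |φ t - φ s| ≤ c * |t - s|) (hv : v ≠ t0) :
    |rsl φ t0 v| ≤ c := by
  have hv' : (0:ℝ) < |v - t0| := abs_pos.2 (sub_ne_zero.2 hv)
  rw [rsl, abs_div, div_le_iff₀ hv']
  exact hlip t0 v

lemma rsl_mono (hconv : ConvexOn ℝ Set.univ φ) (hv : v ≠ t0) (hw : w ≠ t0) (hvw : v ≤ w) :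
    rsl φ t0 v ≤ rsl φ t0 w :=
  hconv.secant_mono trivial trivial trivial hv hw hvw

lemma bddBelow_rsl_range (hlip : ∀ s t, |φ t - φ s| ≤ c * |t - s|) :
    BddBelow (Set.range fun n : ℕ => rsl φ t0 (t0 + 1/(n+1))) := by
  refine ⟨-c, ?_⟩
  rintro x ⟨n, rfl⟩
  have h1 : (0:ℝ) < 1/(n+1) := by positivity
  have := abs_rsl_le (t0 := t0) (v := t0 + 1/(n+1)) hlip (by nlinarith)
  linarith [neg_abs_le (rsl φ t0 (t0 + 1/(n+1)))]

lemma bddAbove_lsl_range (hlip : ∀ s t, |φ t - φ s| ≤ c * |t - s|) :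
    BddAbove (Set.range fun n : ℕ => rsl φ t0 (t0 - 1/(n+1))) := by
  refine ⟨c, ?_⟩
  rintro x ⟨n, rfl⟩
  have h1 : (0:ℝ) < 1/(n+1) := by positivity
  have := abs_rsl_le (t0 := t0) (v := t0 - 1/(n+1)) hlip (by intro h; nlinarith [congrArg (fun x => x - t0) h])
  linarith [le_abs_self (rsl φ t0 (t0 - 1/(n+1)))]

lemma Dplus_le_rsl (hconv : ConvexOn ℝ Set.univ φ)
    (hlip : ∀ s t, |φ t - φ s| ≤ c * |t - s|) (hv : t0 < v) :
    Dplus φ t0 ≤ rsl φ t0 v := by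
  obtain ⟨n, hn⟩ := exists_nat_one_div_lt (show (0:ℝ) < v - t0 by linarith)
  have h1 : (0:ℝ) < 1/(n+1) := by positivity
  refine ciInf_le_of_le (bddBelow_rsl_range hlip) n ?_
  exact rsl_mono hconv (by nlinarith) (by intro h; nlinarith [congrArg (fun x => x - t0) h]) (by push_cast at hn ⊢; nlinarith)

lemma rsl_le_Dminus (hconv : ConvexOn ℝ Set.univ φ)
    (hlip : ∀ s t, |φ t - φ s| ≤ c * |t - s|) (hv : v < t0) :
    rsl φ t0 v ≤ Dminus φ t0 := by
  obtain ⟨n, hn⟩ := exists_nat_one_div_lt (show (0:ℝ) < t0 - v by linarith)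
  have h1 : (0:ℝ) < 1/(n+1) := by positivity
  refine le_ciSup_of_le (bddAbove_lsl_range hlip) n ?_
  refine rsl_mono hconv (by intro h; nlinarith [congrArg (fun x => x - t0) h])
    (by intro h; nlinarith [congrArg (fun x => x - t0) h]) ?_
  push_cast at hn ⊢; nlinarith

lemma abs_Dplus_le (hconv : ConvexOn ℝ Set.univ φ)
    (hlip : ∀ s t, |φ t - φ s| ≤ c * |t - s|) : |Dplus φ t0| ≤ c := by
  rw [abs_le]
  constructor
  · refine le_ciInf fun n => ?_
    have h1 : (0:ℝ) < 1/(n+1) := by positivity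
    have := abs_rsl_le (t0 := t0) (v := t0 + 1/(n+1)) hlip (by nlinarith)
    linarith [neg_abs_le (rsl φ t0 (t0 + 1/(n+1)))]
  · refine le_trans (Dplus_le_rsl hconv hlip (show t0 < t0 + 1 by linarith)) ?_
    have := abs_rsl_le (t0 := t0) (v := t0 + 1) hlip (by intro h; nlinarith [congrArg (fun x => x - t0) h])
    linarith [le_abs_self (rsl φ t0 (t0 + 1))]

lemma abs_Dminus_le (hconv : ConvexOn ℝ Set.univ φ)
    (hlip : ∀ s t, |φ t - φ s| ≤ c * |t - s|) : |Dminus φ t0| ≤ c := by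
  rw [abs_le]
  constructor
  · refine le_trans ?_ (rsl_le_Dminus hconv hlip (show t0 - 1 < t0 by linarith))
    have := abs_rsl_le (t0 := t0) (v := t0 - 1) hlip (by intro h; nlinarith [congrArg (fun x => x - t0) h])
    linarith [neg_abs_le (rsl φ t0 (t0 - 1))]
  · refine ciSup_le fun n => ?_
    have h1 : (0:ℝ) < 1/(n+1) := by positivity
    have := abs_rsl_le (t0 := t0) (v := t0 - 1/(n+1)) hlip (by intro h; nlinarith [congrArg (fun x => x - t0) h])
    linarith [le_abs_self (rsl φ t0 (t0 - 1/(n+1)))]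

lemma Dminus_le_Dplus (hconv : ConvexOn ℝ Set.univ φ)
    (hlip : ∀ s t, |φ t - φ s| ≤ c * |t - s|) : Dminus φ t0 ≤ Dplus φ t0 := by
  refine ciSup_le fun n => le_ciInf fun m => ?_
  have h1 : (0:ℝ) < 1/(n+1) := by positivity
  have h2 : (0:ℝ) < 1/(m+1) := by positivity
  exact rsl_mono hconv (by intro h; nlinarith [congrArg (fun x => x - t0) h])
    (by nlinarith) (by nlinarith)

lemma subgrad_of_between (hconv : ConvexOn ℝ Set.univ φ)
    (hlip : ∀ s t, |φ t - φ s| ≤ c * |t - s|) {h : ℝ}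
    (h1 : Dminus φ t0 ≤ h) (h2 : h ≤ Dplus φ t0) (v : ℝ) :
    h * (v - t0) ≤ φ v - φ t0 := by
  rcases lt_trichotomy v t0 with hv | rfl | hv
  · have hs : rsl φ t0 v ≤ h := le_trans (rsl_le_Dminus hconv hlip hv) h1
    have hd : v - t0 < 0 := by linarith
    have : φ v - φ t0 = rsl φ t0 v * (v - t0) := by
      rw [rsl, div_mul_cancel₀ _ (sub_ne_zero.2 hv.ne)]
    rw [this]
    nlinarith
  · simp
  · have hs : h ≤ rsl φ t0 v := le_trans h2 (Dplus_le_rsl hconv hlip hv)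
    have hd : 0 < v - t0 := by linarith
    have : φ v - φ t0 = rsl φ t0 v * (v - t0) := by
      rw [rsl, div_mul_cancel₀ _ (sub_ne_zero.2 hv.ne')]
    rw [this]
    nlinarith

lemma tendsto_rsl_Dplus (hconv : ConvexOn ℝ Set.univ φ)
    (hlip : ∀ s t, |φ t - φ s| ≤ c * |t - s|) {s : ℕ → ℝ} (hs : ∀ n, 0 < s n)
    (hs0 : Tendsto s atTop (𝓝 0)) :
    Tendsto (fun n => rsl φ t0 (t0 + s n)) atTop (𝓝 (Dplus φ t0)) := by
  rw [Metric.tendsto_atTop]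
  intro ε hε
  have hlt : Dplus φ t0 < Dplus φ t0 + ε := by linarith
  obtain ⟨n₀, hn₀⟩ := exists_lt_of_ciInf_lt hlt
  have h1 : (0:ℝ) < 1/(n₀+1) := by positivity
  obtain ⟨N, hN⟩ := (Metric.tendsto_atTop.1 hs0) (1/(n₀+1)) h1
  refine ⟨N, fun n hn => ?_⟩
  have hsn := hs n
  have hsn' : s n < 1/(n₀+1) := by
    have := hN n hn; rw [Real.dist_eq, sub_zero, abs_of_pos hsn] at this; exact this
  have hle : rsl φ t0 (t0 + s n) ≤ rsl φ t0 (t0 + 1/(n₀+1)) :=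
    rsl_mono hconv (by nlinarith) (by nlinarith) (by nlinarith)
  have hge : Dplus φ t0 ≤ rsl φ t0 (t0 + s n) := Dplus_le_rsl hconv hlip (by nlinarith)
  rw [Real.dist_eq, abs_of_nonneg (by linarith)]
  linarith

lemma tendsto_rsl_Dminus (hconv : ConvexOn ℝ Set.univ φ)
    (hlip : ∀ s t, |φ t - φ s| ≤ c * |t - s|) {s : ℕ → ℝ} (hs : ∀ n, 0 < s n)
    (hs0 : Tendsto s atTop (𝓝 0)) :
    Tendsto (fun n => rsl φ t0 (t0 - s n)) atTop (𝓝 (Dminus φ t0)) := by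
  rw [Metric.tendsto_atTop]
  intro ε hε
  have hlt : Dminus φ t0 - ε < Dminus φ t0 := by linarith
  obtain ⟨n₀, hn₀⟩ := exists_lt_of_lt_ciSup hlt
  have h1 : (0:ℝ) < 1/(n₀+1) := by positivity
  obtain ⟨N, hN⟩ := (Metric.tendsto_atTop.1 hs0) (1/(n₀+1)) h1
  refine ⟨N, fun n hn => ?_⟩
  have hsn := hs n
  have hsn' : s n < 1/(n₀+1) := by
    have := hN n hn; rw [Real.dist_eq, sub_zero, abs_of_pos hsn] at this; exact this
  have hle : rsl φ t0 (t0 - 1/(n₀+1)) ≤ rsl φ t0 (t0 - s n) :=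
    rsl_mono hconv (by intro h; nlinarith [congrArg (fun x => x - t0) h])
      (by intro h; nlinarith [congrArg (fun x => x - t0) h]) (by nlinarith)
  have hge : rsl φ t0 (t0 - s n) ≤ Dminus φ t0 := rsl_le_Dminus hconv hlip (by nlinarith)
  rw [Real.dist_eq, abs_of_nonpos (by linarith)]
  linarith

lemma tendsto_diffquot (hconv : ConvexOn ℝ Set.univ φ)
    (hlip : ∀ s t, |φ t - φ s| ≤ c * |t - s|) (u : ℝ) :
    Tendsto (fun n : ℕ => (φ (t0 + u/(n+1)) - φ t0) * (n+1)) atTop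
      (𝓝 (if 0 ≤ u then u * Dplus φ t0 else u * Dminus φ t0)) := by
  have hten : Tendsto (fun n : ℕ => (1:ℝ)/(n+1)) atTop (𝓝 0) :=
    tendsto_one_div_add_atTop_nhds_zero_nat
  rcases lt_trichotomy u 0 with hu | rfl | hu
  · rw [if_neg (not_le.2 hu)]
    have heq : ∀ n : ℕ, (φ (t0 + u/(n+1)) - φ t0) * (n+1) = u * rsl φ t0 (t0 - (-u)/(n+1)) := by
      intro n
      rw [rsl]
      have h2 : t0 - (-u)/(n+1) = t0 + u/(n+1) := by ring
      rw [h2]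
      have hd : t0 + u/(n+1) - t0 = u/(n+1) := by ring
      rw [hd, div_div_eq_mul_div, ← mul_div_assoc, mul_div_cancel_left₀ _ hu.ne]
    simp only [heq]
    refine Tendsto.const_mul u (tendsto_rsl_Dminus hconv hlip
      (fun n => div_pos (by linarith) (by positivity)) ?_)
    have h3 : Tendsto (fun n : ℕ => (-u) * (1/((n:ℝ)+1))) atTop (𝓝 0) := by
      simpa using hten.const_mul (-u)
    simpa [neg_div, div_eq_mul_inv] using h3
  · simp only [zero_div, add_zero, sub_self, zero_mul, if_pos le_rfl]
    exact tendsto_const_nhds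
  · rw [if_pos hu.le]
    have heq : ∀ n : ℕ, (φ (t0 + u/(n+1)) - φ t0) * (n+1) = u * rsl φ t0 (t0 + u/(n+1)) := by
      intro n
      rw [rsl]
      have hd : t0 + u/(n+1) - t0 = u/(n+1) := by ring
      rw [hd, div_div_eq_mul_div, ← mul_div_assoc, mul_div_cancel_left₀ _ hu.ne']
    simp only [heq]
    refine Tendsto.const_mul u (tendsto_rsl_Dplus hconv hlip
      (fun n => div_pos hu (by positivity)) ?_)
    have h3 : Tendsto (fun n : ℕ => u * (1/((n:ℝ)+1))) atTop (𝓝 0) := by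
      simpa using hten.const_mul u
    simpa [div_eq_mul_inv] using h3

lemma abs_diffquot_le (hlip : ∀ s t, |φ t - φ s| ≤ c * |t - s|) (u : ℝ) (n : ℕ) :
    |(φ (t0 + u/(n+1)) - φ t0) * (n+1)| ≤ c * |u| := by
  have hn1 : (0:ℝ) < (n:ℝ)+1 := by positivity
  have h := hlip t0 (t0 + u/(n+1))
  have hd : t0 + u/(n+1) - t0 = u/(n+1) := by ring
  rw [hd, abs_div, abs_of_pos hn1] at h
  rw [abs_mul, abs_of_pos hn1]
  calc |φ (t0 + u/(n+1)) - φ t0| * ((n:ℝ)+1) ≤ c * (|u|/((n:ℝ)+1)) * ((n:ℝ)+1) := by nlinarith [abs_nonneg (φ (t0 + u/(n+1)) - φ t0)]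
    _ = c * |u| := by field_simp

lemma psi_subadd {a b : ℝ} (hba : b ≤ a) (u v : ℝ) :
    (if 0 ≤ u + v then (u+v)*a else (u+v)*b)
      ≤ (if 0 ≤ u then u*a else u*b) + (if 0 ≤ v then v*a else v*b) := by
  split_ifs <;> nlinarith

lemma psi_hom {a b r u : ℝ} (hr : 0 < r) :
    (if 0 ≤ r • u then (r•u)*a else (r•u)*b) = r * (if 0 ≤ u then u*a else u*b) := by
  simp only [smul_eq_mul]
  rcases le_or_gt 0 u with hu | hu
  · rw [if_pos (by positivity), if_pos hu]; ring
  · rw [if_neg (by nlinarith), if_neg (not_le.2 hu)]; ring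

lemma if_eq_maxmin (a b u : ℝ) :
    (if 0 ≤ u then u * a else u * b) = max u 0 * a + min u 0 * b := by
  rcases le_or_gt 0 u with h | h
  · rw [if_pos h, max_eq_left h, min_eq_right h]; ring
  · rw [if_neg (not_le.2 h), max_eq_right h.le, min_eq_left h.le]; ring

end convex1d

lemma exists_density_subgradient
    {Z : Type*} [MeasurableSpace Z] (μ : Measure Z) [IsProbabilityMeasure μ]
    {H : Type*} [NormedAddCommGroup H] [InnerProductSpace ℝ H] [CompleteSpace H]
    [TopologicalSpace.SeparableSpace H] [MeasurableSpace H] [BorelSpace H]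
    (Ψ : Z → H) (hΨ : Measurable Ψ) (kb : ℝ) (hkb : ∀ z, ‖Ψ z‖ ≤ kb)
    (c : ℝ) (hc : 0 ≤ c)
    (Dm Dp : Z → ℝ) (hDmm : Measurable Dm) (hDpm : Measurable Dp)
    (hDmb : ∀ z, |Dm z| ≤ c) (hDpb : ∀ z, |Dp z| ≤ c) (hDmDp : ∀ z, Dm z ≤ Dp z)
    (w : H)
    (key : ∀ g : H, ⟪w, g⟫ ≤ ∫ z, (max (⟪g, Ψ z⟫) 0 * Dp z + min (⟪g, Ψ z⟫) 0 * Dm z) ∂μ) :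
    ∃ h : Z → ℝ, Measurable h ∧ (∀ z, Dm z ≤ h z ∧ h z ≤ Dp z) ∧
      (∫ z, h z • Ψ z ∂μ) = w := by
  classical
  haveI : SecondCountableTopology H := UniformSpace.secondCountable_of_separable H
  have hbint : ∀ (v : Z → ℝ) (M : ℝ), Measurable v → (∀ z, |v z| ≤ M) → Integrable v μ :=
    fun v M hv hM => ⟨hv.aestronglyMeasurable,
      HasFiniteIntegral.of_bounded (C := M) (ae_of_all _ (fun z => by simpa using hM z))⟩
  set ψ : Z → ℝ → ℝ := fun z u => max u 0 * Dp z + min u 0 * Dm z with hψdef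
  have hψeq : ∀ z u, ψ z u = ((Dp z + Dm z)/2) * u + ((Dp z - Dm z)/2) * |u| := by
    intro z u
    rcases le_or_gt 0 u with hu | hu
    · rw [hψdef]; dsimp only; rw [abs_of_nonneg hu, max_eq_left hu, min_eq_right hu]; ring
    · rw [hψdef]; dsimp only; rw [abs_of_neg hu, max_eq_right hu.le, min_eq_left hu.le]; ring
  have hψm : ∀ {v : Z → ℝ}, Measurable v → Measurable fun z => ψ z (v z) := fun {v} hv =>
    ((hv.max measurable_const).mul hDpm).add ((hv.min measurable_const).mul hDmm)
  have hψb : ∀ z u, |ψ z u| ≤ c * |u| := by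
    intro z u
    rcases le_or_gt 0 u with hu | hu
    · rw [hψdef]; dsimp only; rw [max_eq_left hu, min_eq_right hu, zero_mul, add_zero, abs_mul,
        abs_of_nonneg hu]
      nlinarith [hDpb z, abs_nonneg (Dp z)]
    · rw [hψdef]; dsimp only; rw [max_eq_right hu.le, min_eq_left hu.le, zero_mul, zero_add,
        abs_mul]
      nlinarith [hDmb z, abs_nonneg u]
  have hψsub : ∀ z u v, ψ z (u + v) ≤ ψ z u + ψ z v := by
    intro z u v
    rw [hψeq, hψeq, hψeq]
    have hβ : 0 ≤ (Dp z - Dm z)/2 := by linarith [hDmDp z]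
    nlinarith [abs_add_le u v]
  have hψhom : ∀ z (r : ℝ), 0 < r → ∀ u, ψ z (r * u) = r * ψ z u := by
    intro z r hr u
    rw [hψeq, hψeq, abs_mul, abs_of_pos hr]
    ring
  -- the submodule of bounded measurable functions
  let E : Submodule ℝ (Z → ℝ) :=
    { carrier := {u | Measurable u ∧ ∃ M, ∀ z, |u z| ≤ M}
      add_mem' := fun {u v} hu hv => ⟨hu.1.add hv.1, by
        obtain ⟨M, hM⟩ := hu.2; obtain ⟨M', hM'⟩ := hv.2
        exact ⟨M + M', fun z => (abs_add_le _ _).trans (add_le_add (hM z) (hM' z))⟩⟩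
      zero_mem' := ⟨measurable_const, 0, by simp⟩
      smul_mem' := fun r {u} hu => ⟨by
          have := hu.1
          exact (measurable_const.mul hu.1 : Measurable fun z => r * u z)
        , by
        obtain ⟨M, hM⟩ := hu.2
        exact ⟨|r| * M, fun z => by
          have : |r * u z| = |r| * |u z| := abs_mul r (u z)
          simpa [this] using mul_le_mul_of_nonneg_left (hM z) (abs_nonneg r)⟩⟩ }
  have hmemE : ∀ u : Z → ℝ, u ∈ E ↔ Measurable u ∧ ∃ M, ∀ z, |u z| ≤ M := fun u => Iff.rfl
  have hNint : ∀ u : E, Integrable (fun z => ψ z (u.1 z)) μ := by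
    intro u
    obtain ⟨M, hM⟩ := u.2.2
    refine hbint _ (c * M) (hψm u.2.1) fun z => (hψb z _).trans ?_
    have := hM z
    nlinarith [abs_nonneg (u.1 z)]
  have habsint : ∀ u : E, Integrable (fun z => |u.1 z|) μ := by
    intro u
    obtain ⟨M, hM⟩ := u.2.2
    exact hbint _ M u.2.1.abs fun z => by simpa [abs_abs] using hM z
  set N : E → ℝ := fun u => ∫ z, ψ z (u.1 z) ∂μ with hNdef
  have hN_le : ∀ u : E, N u ≤ c * ∫ z, |u.1 z| ∂μ := by
    intro u
    rw [hNdef]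
    calc ∫ z, ψ z (u.1 z) ∂μ ≤ ∫ z, c * |u.1 z| ∂μ := by
          refine integral_mono (hNint u) ((habsint u).const_mul c) fun z => ?_
          exact (le_abs_self _).trans (hψb z _)
      _ = c * ∫ z, |u.1 z| ∂μ := integral_const_mul c _
  have hN_add : ∀ u v : E, N (u + v) ≤ N u + N v := by
    intro u v
    rw [hNdef]
    calc ∫ z, ψ z ((u + v).1 z) ∂μ ≤ ∫ z, (ψ z (u.1 z) + ψ z (v.1 z)) ∂μ := by
          refine integral_mono (hNint (u+v)) ((hNint u).add (hNint v)) fun z => ?_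
          exact hψsub z (u.1 z) (v.1 z)
      _ = N u + N v := integral_add (hNint u) (hNint v)
  have hN_hom : ∀ (r : ℝ), 0 < r → ∀ u : E, N (r • u) = r * N u := by
    intro r hr u
    rw [hNdef]
    have : ∀ z, ψ z ((r • u).1 z) = r * ψ z (u.1 z) := fun z => hψhom z r hr (u.1 z)
    simp only [this]
    exact integral_const_mul r _
  -- the linear map T : H → E
  have hTmem : ∀ g : H, (fun z => ⟪g, Ψ z⟫) ∈ E := by
    intro g
    refine ⟨measurable_const.inner hΨ, ‖g‖ * kb, fun z => ?_⟩
    calc |⟪g, Ψ z⟫| ≤ ‖g‖ * ‖Ψ z‖ := abs_real_inner_le_norm g (Ψ z)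
      _ ≤ ‖g‖ * kb := mul_le_mul_of_nonneg_left (hkb z) (norm_nonneg g)
  let T : H →ₗ[ℝ] E :=
    { toFun := fun g => ⟨fun z => ⟪g, Ψ z⟫, hTmem g⟩
      map_add' := fun g g' => Subtype.ext (funext fun z => inner_add_left g g' (Ψ z))
      map_smul' := fun r g => Subtype.ext (funext fun z => real_inner_smul_left g (Ψ z) r) }
  have hTapp : ∀ (g : H) (z : Z), (T g).1 z = ⟪g, Ψ z⟫ := fun g z => rfl
  -- key inequality in terms of N
  have key' : ∀ g : H, ⟪w, g⟫ ≤ N (T g) := fun g => key g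
  -- Hahn-Banach extension
  have hψ0 : ∀ z, ψ z 0 = 0 := by intro z; rw [hψeq]; simp
  have hSeq : ∀ g g' : H, T g = T g' → ⟪w, g⟫ = ⟪w, g'⟫ := by
    intro g g' hgg'
    have hzero : ∀ z, ⟪g - g', Ψ z⟫ = (0:ℝ) := by
      intro z
      have h1 := congrArg (fun u : E => u.1 z) hgg'
      simp only [hTapp] at h1
      rw [inner_sub_left, h1, sub_self]
    have hzero' : ∀ z, ⟪g' - g, Ψ z⟫ = (0:ℝ) := by
      intro z
      have h1 := hzero z
      rw [show g' - g = -(g - g') by abel, inner_neg_left, h1, neg_zero]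
    have hNz : N (T (g - g')) = 0 := by
      rw [hNdef]
      have h2 : ∀ z, ψ z ((T (g - g')).1 z) = 0 := by
        intro z; rw [hTapp, hzero z, hψ0]
      simp only [h2]
      exact integral_zero _ _
    have hNz' : N (T (g' - g)) = 0 := by
      rw [hNdef]
      have h2 : ∀ z, ψ z ((T (g' - g)).1 z) = 0 := by
        intro z; rw [hTapp, hzero' z, hψ0]
      simp only [h2]
      exact integral_zero _ _
    have h3 := key' (g - g'); rw [hNz, inner_sub_right] at h3
    have h4 := key' (g' - g); rw [hNz', inner_sub_right] at h4
    linarith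
  have hGext : ∃ G : E →ₗ[ℝ] ℝ, (∀ g : H, G (T g) = ⟪w, g⟫) ∧ ∀ u : E, G u ≤ N u := by
    have hrange : ∀ v : LinearMap.range T, ∃ g : H, T g = v.1 := fun v => v.2
    choose sec hsec using hrange
    let ℓ₀ : LinearMap.range T →ₗ[ℝ] ℝ :=
      { toFun := fun v => ⟪w, sec v⟫
        map_add' := by
          intro v v'
          show ⟪w, sec (v + v')⟫ = ⟪w, sec v⟫ + ⟪w, sec v'⟫
          have h1 : T (sec (v + v')) = T (sec v + sec v') := by
            rw [map_add, hsec, hsec, hsec]; rfl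
          rw [hSeq _ _ h1, inner_add_right]
        map_smul' := by
          intro r v
          show ⟪w, sec (r • v)⟫ = (RingHom.id ℝ) r • ⟪w, sec v⟫
          have h1 : T (sec (r • v)) = T (r • sec v) := by
            rw [_root_.map_smul, hsec, hsec]; rfl
          rw [hSeq _ _ h1, real_inner_smul_right]
          simp }
    obtain ⟨G, hGeq, hGle⟩ := exists_extension_of_le_sublinear ⟨LinearMap.range T, ℓ₀⟩ N
      (fun r hr u => hN_hom r hr u) hN_add
      (fun v => by
        have h5 := key' (sec v)
        rwa [hsec v] at h5)
    refine ⟨G, fun g => ?_, hGle⟩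
    have h6 := hGeq ⟨T g, LinearMap.mem_range_self T g⟩
    have h7 : ℓ₀ ⟨T g, LinearMap.mem_range_self T g⟩ = ⟪w, g⟫ :=
      hSeq _ _ (hsec ⟨T g, LinearMap.mem_range_self T g⟩)
    exact h6.trans h7
  obtain ⟨G, hGT, hGN⟩ := hGext
  have hGabs : ∀ u : E, |G u| ≤ c * ∫ z, |u.1 z| ∂μ := by
    intro u
    rw [abs_le]
    constructor
    · have h1 := (hGN (-u)).trans (hN_le (-u))
      have h2 : G (-u) = -G u := map_neg G u
      have h3 : ∀ z, |(-u).1 z| = |u.1 z| := fun z => abs_neg (u.1 z)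
      rw [h2] at h1
      simp only [h3] at h1
      linarith
    · exact (hGN u).trans (hN_le u)
  -- indicator elements
  have hχmem : ∀ A : Set Z, MeasurableSet A → (A.indicator (fun _ => (1:ℝ))) ∈ E := by
    intro A hA
    refine ⟨measurable_one.indicator hA, 1, fun z => ?_⟩
    rcases Set.indicator_eq_zero_or_self A (fun _ => (1:ℝ)) z with h | h <;> rw [h] <;> norm_num
  set χ : ∀ A : Set Z, MeasurableSet A → E := fun A hA => ⟨A.indicator (fun _ => 1), hχmem A hA⟩
    with hχdef
  have hind_abs : ∀ A : Set Z, ∀ z, |A.indicator (fun _ => (1:ℝ)) z| = A.indicator (fun _ => (1:ℝ)) z := by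
    intro A z
    rcases Set.indicator_eq_zero_or_self A (fun _ => (1:ℝ)) z with h | h <;> rw [h] <;> norm_num
  have hind_int : ∀ A : Set Z, MeasurableSet A → ∫ z, |A.indicator (fun _ => (1:ℝ)) z| ∂μ = (μ A).toReal := by
    intro A hA
    simp only [hind_abs A]
    rw [integral_indicator hA]
    simp
    rfl
  have hνr_abs : ∀ A (hA : MeasurableSet A), |G (χ A hA)| ≤ c * (μ A).toReal := by
    intro A hA
    refine (hGabs _).trans ?_
    rw [hχdef]
    exact le_of_eq (congrArg (c * ·) (hind_int A hA))
  have hχ_add : ∀ A B (hA : MeasurableSet A) (hB : MeasurableSet B), Disjoint A B →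
      χ (A ∪ B) (hA.union hB) = χ A hA + χ B hB := by
    intro A B hA hB hAB
    refine Subtype.ext ?_
    rw [hχdef]
    simpa [Pi.add_def] using Set.indicator_union_of_disjoint hAB (fun _ => (1:ℝ))
  -- finite additivity over finsets
  have hχ0 : χ ∅ MeasurableSet.empty = 0 := Subtype.ext (funext fun z => by
    rw [hχdef]; simp)
  have hfinadd : ∀ (f : ℕ → Set Z) (hf : ∀ i, MeasurableSet (f i)), Pairwise (Function.onFun Disjoint f) →
      ∀ s : Finset ℕ, G (χ (⋃ i ∈ s, f i) (s.measurableSet_biUnion (fun i _ => hf i)))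
        = ∑ i ∈ s, G (χ (f i) (hf i)) := by
    intro f hf hd s
    induction s using Finset.induction with
    | empty => simp [hχ0]
    | @insert a s ha ih =>
      have hA : MeasurableSet (f a) := hf a
      have hB : MeasurableSet (⋃ i ∈ s, f i) := s.measurableSet_biUnion (fun i _ => hf i)
      have hdisj : Disjoint (f a) (⋃ i ∈ s, f i) := by
        rw [Set.disjoint_iUnion₂_right]
        intro i hi
        exact hd (fun hai => ha (hai ▸ hi))
      have hset : (⋃ i ∈ insert a s, f i) = f a ∪ ⋃ i ∈ s, f i := by
        simp [Set.biUnion_insert]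
      have hval : χ (⋃ i ∈ insert a s, f i) ((insert a s).measurableSet_biUnion (fun i _ => hf i))
          = χ (f a ∪ ⋃ i ∈ s, f i) (hA.union hB) := Subtype.ext (by rw [hχdef]; simp only; rw [hset])
      rw [hval, hχ_add _ _ hA hB hdisj, map_add, ih, Finset.sum_insert ha]
  have hμrsum : ∀ (f : ℕ → Set Z), (∀ i, MeasurableSet (f i)) → Pairwise (Function.onFun Disjoint f) →
      HasSum (fun i => (μ (f i)).toReal) ((μ (⋃ i, f i)).toReal) := by
    intro f hf hd
    have h1 : Summable fun i => (μ (f i)).toReal :=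
      ENNReal.summable_toReal (by rw [← measure_iUnion hd hf]; exact measure_ne_top μ _)
    have h2 : ∑' i, (μ (f i)).toReal = (μ (⋃ i, f i)).toReal := by
      rw [measure_iUnion hd hf, ENNReal.tsum_toReal_eq (fun i => measure_ne_top μ _)]
    exact h2 ▸ h1.hasSum
  have hHasSum : ∀ (f : ℕ → Set Z) (hf : ∀ i, MeasurableSet (f i)), Pairwise (Function.onFun Disjoint f) →
      HasSum (fun i => G (χ (f i) (hf i))) (G (χ (⋃ i, f i) (MeasurableSet.iUnion hf))) := by
    intro f hf hd
    have hμs := hμrsum f hf hd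
    rw [HasSum]
    rw [tendsto_iff_dist_tendsto_zero]
    have hbnd : ∀ s : Finset ℕ,
        dist (∑ i ∈ s, G (χ (f i) (hf i))) (G (χ (⋃ i, f i) (MeasurableSet.iUnion hf)))
          ≤ c * ((μ (⋃ i, f i)).toReal - ∑ i ∈ s, (μ (f i)).toReal) := by
      intro s
      have hA : MeasurableSet (⋃ i ∈ s, f i) := s.measurableSet_biUnion (fun i _ => hf i)
      have hU : MeasurableSet (⋃ i, f i) := MeasurableSet.iUnion hf
      have hBset : MeasurableSet ((⋃ i, f i) \ ⋃ i ∈ s, f i) := hU.diff hA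
      have hsub : (⋃ i ∈ s, f i) ⊆ ⋃ i, f i := Set.iUnion₂_subset fun i _ => Set.subset_iUnion f i
      have hunion : (⋃ i ∈ s, f i) ∪ ((⋃ i, f i) \ ⋃ i ∈ s, f i) = ⋃ i, f i :=
        Set.union_diff_cancel hsub
      have hdisj2 : Disjoint (⋃ i ∈ s, f i) ((⋃ i, f i) \ ⋃ i ∈ s, f i) :=
        disjoint_sdiff_self_right
      have hGU : G (χ (⋃ i, f i) hU) = G (χ (⋃ i ∈ s, f i) hA) + G (χ _ hBset) := by
        have h1 := hχ_add _ _ hA hBset hdisj2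
        have h2 : χ (⋃ i, f i) hU
            = χ ((⋃ i ∈ s, f i) ∪ ((⋃ i, f i) \ ⋃ i ∈ s, f i)) (hA.union hBset) :=
          Subtype.ext (by rw [hχdef]; simp only; rw [hunion])
        rw [h2, h1, map_add]
      have hmeasadd : (μ (⋃ i, f i)).toReal
          = (μ (⋃ i ∈ s, f i)).toReal + (μ ((⋃ i, f i) \ ⋃ i ∈ s, f i)).toReal := by
        rw [← ENNReal.toReal_add (measure_ne_top μ _) (measure_ne_top μ _),
          ← measure_union hdisj2 hBset, hunion]
      have hpart : (μ (⋃ i ∈ s, f i)).toReal = ∑ i ∈ s, (μ (f i)).toReal := by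
        rw [measure_biUnion_finset (fun i _ j _ hij => hd hij) (fun i _ => hf i)]
        exact ENNReal.toReal_sum (fun i _ => measure_ne_top μ _)
      rw [Real.dist_eq, ← hfinadd f hf hd s, hGU, sub_add_eq_sub_sub, sub_self, zero_sub, abs_neg]
      calc |G (χ _ hBset)| ≤ c * (μ ((⋃ i, f i) \ ⋃ i ∈ s, f i)).toReal := hνr_abs _ hBset
        _ = c * ((μ (⋃ i, f i)).toReal - ∑ i ∈ s, (μ (f i)).toReal) := by
            rw [hmeasadd, hpart]; ring
    refine squeeze_zero (fun s => dist_nonneg) hbnd ?_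
    have hμs' : Tendsto (fun s : Finset ℕ => ∑ i ∈ s, (μ (f i)).toReal) atTop
        (𝓝 ((μ (⋃ i, f i)).toReal)) := hμs
    have h7 : Tendsto (fun s : Finset ℕ =>
        c * ((μ (⋃ i, f i)).toReal - ∑ i ∈ s, (μ (f i)).toReal)) atTop
        (𝓝 (c * ((μ (⋃ i, f i)).toReal - (μ (⋃ i, f i)).toReal))) :=
      (Tendsto.sub tendsto_const_nhds hμs').const_mul c
    simpa using h7
  -- the measure m
  have hνr_nonneg : ∀ A (hA : MeasurableSet A), 0 ≤ G (χ A hA) + c * (μ A).toReal := by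
    intro A hA
    have h1 := (abs_le.1 (hνr_abs A hA)).1
    linarith
  have hm0 : ENNReal.ofReal (G (χ ∅ MeasurableSet.empty) + c * (μ (∅ : Set Z)).toReal) = 0 := by
    rw [hχ0, map_zero]
    simp
  have hmU : ∀ (f : ℕ → Set Z) (hf : ∀ i, MeasurableSet (f i)), Pairwise (Function.onFun Disjoint f) →
      ENNReal.ofReal (G (χ (⋃ i, f i) (MeasurableSet.iUnion hf)) + c * (μ (⋃ i, f i)).toReal)
        = ∑' i, ENNReal.ofReal (G (χ (f i) (hf i)) + c * (μ (f i)).toReal) := by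
    intro f hf hd
    have hsum : HasSum (fun i => G (χ (f i) (hf i)) + c * (μ (f i)).toReal)
        (G (χ (⋃ i, f i) (MeasurableSet.iUnion hf)) + c * (μ (⋃ i, f i)).toReal) :=
      (hHasSum f hf hd).add ((hμrsum f hf hd).mul_left c)
    rw [← hsum.tsum_eq, ENNReal.ofReal_tsum_of_nonneg (fun i => hνr_nonneg (f i) (hf i)) hsum.summable]
  set m : Measure Z := Measure.ofMeasurable
    (fun A hA => ENNReal.ofReal (G (χ A hA) + c * (μ A).toReal)) hm0 hmU with hmdef
  have hmapp : ∀ A (hA : MeasurableSet A),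
      m A = ENNReal.ofReal (G (χ A hA) + c * (μ A).toReal) := by
    intro A hA
    rw [hmdef]
    exact Measure.ofMeasurable_apply A hA
  haveI : IsFiniteMeasure m := ⟨by rw [hmapp univ MeasurableSet.univ]; exact ENNReal.ofReal_lt_top⟩
  have habsc : m ≪ μ := by
    refine Measure.AbsolutelyContinuous.mk fun A hA hA0 => ?_
    have h1 := hνr_abs A hA
    rw [hA0] at h1
    simp only [ENNReal.toReal_zero, mul_zero, abs_nonpos_iff] at h1
    rw [hmapp A hA, h1, hA0]
    simp
  have hmtoReal : ∀ A (hA : MeasurableSet A),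
      (m A).toReal = G (χ A hA) + c * (μ A).toReal := by
    intro A hA
    rw [hmapp A hA, ENNReal.toReal_ofReal (hνr_nonneg A hA)]
  -- Radon-Nikodym
  set h₁ : Z → ℝ := fun z => (m.rnDeriv μ z).toReal - c with hh₁def
  have hh₁m : Measurable h₁ := (Measure.measurable_rnDeriv m μ).ennreal_toReal.sub measurable_const
  have hint1 : Integrable (fun z => (m.rnDeriv μ z).toReal) μ := Measure.integrable_toReal_rnDeriv
  have hint_h₁ : Integrable h₁ μ := hint1.sub (integrable_const c)
  have hseth : ∀ A (hA : MeasurableSet A), ∫ z in A, h₁ z ∂μ = G (χ A hA) := by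
    intro A hA
    rw [hh₁def]
    simp only
    rw [integral_sub hint1.integrableOn (integrableOn_const),
      Measure.setIntegral_toReal_rnDeriv' habsc hA, measureReal_def, hmtoReal A hA, setIntegral_const]
    simp only [smul_eq_mul, measureReal_def]
    ring
  -- step B1 : simple functions
  have hSmem : ∀ ϕ : SimpleFunc Z ℝ, (ϕ : Z → ℝ) ∈ E := by
    intro ϕ
    obtain ⟨C, hC⟩ := ϕ.exists_forall_norm_le
    exact ⟨ϕ.measurable, C, fun z => by simpa [Real.norm_eq_abs] using hC z⟩
  have hmul_int : ∀ u : E, Integrable (fun z => h₁ z * u.1 z) μ := by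
    intro u
    obtain ⟨M, hM⟩ := u.2.2
    have h1 := hint_h₁.bdd_mul u.2.1.aestronglyMeasurable (c := M) (ae_of_all _ fun z => by
      simpa [Real.norm_eq_abs] using hM z)
    simpa [mul_comm] using h1
  have hB1 : ∀ (ϕ : SimpleFunc Z ℝ) (hϕ : (ϕ : Z → ℝ) ∈ E),
      ∫ z, h₁ z * ϕ z ∂μ = G ⟨ϕ, hϕ⟩ := by
    intro ϕ
    induction ϕ using SimpleFunc.induction with
    | @const r s hs =>
      intro hϕ
      have hfeq : ⇑(SimpleFunc.piecewise s hs (SimpleFunc.const Z r) (SimpleFunc.const Z 0))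
          = r • (s.indicator (fun _ => (1:ℝ))) := by
        funext z
        by_cases hz : z ∈ s <;>
          simp [SimpleFunc.piecewise_apply, hz, Set.indicator_of_mem, Set.indicator_of_notMem]
      have hel : (⟨_, hϕ⟩ : E) = r • χ s hs := Subtype.ext (by rw [hχdef]; simp only; exact hfeq)
      rw [hel, _root_.map_smul, smul_eq_mul]
      have hint2 : ∀ z, h₁ z * (⇑(SimpleFunc.piecewise s hs (SimpleFunc.const Z r)
          (SimpleFunc.const Z 0)) z) = s.indicator (fun z => r * h₁ z) z := by
        intro z
        rw [hfeq]
        by_cases hz : z ∈ s <;>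
          simp [hz, Set.indicator_of_mem, Set.indicator_of_notMem] <;> ring
      calc ∫ z, h₁ z * (⇑(SimpleFunc.piecewise s hs (SimpleFunc.const Z r)
            (SimpleFunc.const Z 0)) z) ∂μ
          = ∫ z, s.indicator (fun z => r * h₁ z) z ∂μ := by simp only [hint2]
        _ = ∫ z in s, r * h₁ z ∂μ := integral_indicator hs
        _ = r * ∫ z in s, h₁ z ∂μ := integral_const_mul r _
        _ = r * G (χ s hs) := by rw [hseth s hs]
    | @add ϕ ϕ' hdisj ih ih' =>
      intro hϕ
      have hel : (⟨_, hϕ⟩ : E) = ⟨⇑ϕ, hSmem ϕ⟩ + ⟨⇑ϕ', hSmem ϕ'⟩ := Subtype.ext (by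
        simp [SimpleFunc.coe_add])
      rw [hel, map_add, ← ih (hSmem ϕ), ← ih' (hSmem ϕ')]
      have h1 : ∀ z, h₁ z * (⇑(ϕ + ϕ') z) = h₁ z * ϕ z + h₁ z * ϕ' z := by
        intro z
        simp [SimpleFunc.coe_add, mul_add]
      calc ∫ z, h₁ z * (⇑(ϕ + ϕ') z) ∂μ = ∫ z, (h₁ z * ϕ z + h₁ z * ϕ' z) ∂μ := by simp only [h1]
        _ = _ := integral_add (hmul_int ⟨⇑ϕ, hSmem ϕ⟩) (hmul_int ⟨⇑ϕ', hSmem ϕ'⟩)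
  -- step B2 : all bounded measurable functions
  have hB : ∀ u : E, ∫ z, h₁ z * u.1 z ∂μ = G u := by
    intro u
    obtain ⟨M, hM⟩ := u.2.2
    have hM0 : 0 ≤ M := le_trans (abs_nonneg _) (hM (Classical.choice (by
      refine ⟨((Classical.choice ?_ : Z))⟩
      by_contra hne
      rw [not_nonempty_iff] at hne
      have h0 := measure_univ (μ := μ)
      rw [Set.univ_eq_empty_iff.2 hne, measure_empty] at h0
      exact one_ne_zero h0.symm)))
    have hum : Measurable u.1 := u.2.1
    set sn : ℕ → SimpleFunc Z ℝ :=
      fun n => SimpleFunc.approxOn u.1 hum Set.univ 0 (Set.mem_univ 0) n with hsndef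
    have hsn_dist : ∀ n z, dist (sn n z) (u.1 z) ≤ |u.1 z| := by
      intro n z
      have h1 := SimpleFunc.edist_approxOn_le hum (Set.mem_univ (0:ℝ)) z n
      rw [edist_dist, edist_dist] at h1
      have h2 := (ENNReal.ofReal_le_ofReal_iff dist_nonneg).1 h1
      simpa [dist_eq_norm] using h2
    have hsnb : ∀ n z, |sn n z| ≤ 2 * M := by
      intro n z
      have h1 := hsn_dist n z
      rw [Real.dist_eq] at h1
      have h2 := hM z
      calc |sn n z| = |(sn n z - u.1 z) + u.1 z| := by ring_nf
        _ ≤ |sn n z - u.1 z| + |u.1 z| := abs_add_le _ _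
        _ ≤ 2 * M := by linarith
    have hsn_tend : ∀ z, Tendsto (fun n => sn n z) atTop (𝓝 (u.1 z)) := by
      intro z
      exact SimpleFunc.tendsto_approxOn hum (Set.mem_univ 0) (by simp)
    have h2 : Tendsto (fun n => ∫ z, h₁ z * sn n z ∂μ) atTop (𝓝 (∫ z, h₁ z * u.1 z ∂μ)) := by
      refine tendsto_integral_of_dominated_convergence (fun z => |h₁ z| * (2*M))
        (fun n => (hh₁m.mul (sn n).measurable).aestronglyMeasurable)
        (hint_h₁.abs.mul_const (2*M)) (fun n => ae_of_all _ fun z => ?_)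
        (ae_of_all _ fun z => ?_)
      · rw [Real.norm_eq_abs, abs_mul]
        exact mul_le_mul_of_nonneg_left (hsnb n z) (abs_nonneg _)
      · exact (hsn_tend z).const_mul (h₁ z)
    have h5 : Tendsto (fun n => ∫ z, |u.1 z - sn n z| ∂μ) atTop (𝓝 0) := by
      have h6 : Tendsto (fun n => ∫ z, |u.1 z - sn n z| ∂μ) atTop (𝓝 (∫ (_ : Z), (0:ℝ) ∂μ)) := by
        refine tendsto_integral_of_dominated_convergence (fun _ => 3*M)
          (fun n => (hum.sub (sn n).measurable).abs.aestronglyMeasurable)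
          (integrable_const _) (fun n => ae_of_all _ fun z => ?_) (ae_of_all _ fun z => ?_)
        · rw [Real.norm_eq_abs, abs_abs]
          calc |u.1 z - sn n z| ≤ |u.1 z| + |sn n z| := abs_sub _ _
            _ ≤ 3*M := by linarith [hM z, hsnb n z]
        · have h7 : Tendsto (fun n => u.1 z - sn n z) atTop (𝓝 (u.1 z - u.1 z)) :=
            Tendsto.sub tendsto_const_nhds (hsn_tend z)
          rw [sub_self] at h7
          simpa using h7.abs
      simpa using h6
    have h3 : Tendsto (fun n => G ⟨⇑(sn n), hSmem (sn n)⟩) atTop (𝓝 (G u)) := by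
      rw [tendsto_iff_dist_tendsto_zero]
      refine squeeze_zero (fun n => dist_nonneg) (g := fun n => c * ∫ z, |u.1 z - sn n z| ∂μ)
        (fun n => ?_) (by simpa using h5.const_mul c)
      have h8 : u - ⟨⇑(sn n), hSmem (sn n)⟩ = (⟨fun z => u.1 z - sn n z, by
          exact sub_mem u.2 (hSmem (sn n))⟩ : E) := Subtype.ext rfl
      have h9 := hGabs (u - ⟨⇑(sn n), hSmem (sn n)⟩)
      rw [map_sub, h8] at h9
      rw [Real.dist_eq, abs_sub_comm]
      exact h9
    have h6 : ∀ n, ∫ z, h₁ z * sn n z ∂μ = G ⟨⇑(sn n), hSmem (sn n)⟩ :=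
      fun n => hB1 (sn n) (hSmem (sn n))
    have h2' : Tendsto (fun n => G ⟨⇑(sn n), hSmem (sn n)⟩) atTop
        (𝓝 (∫ z, h₁ z * u.1 z ∂μ)) := by
      refine h2.congr fun n => h6 n
    exact tendsto_nhds_unique h2' h3
  -- a.e. bounds
  have hNχ_up : ∀ A (hA : MeasurableSet A), N (χ A hA) = ∫ z in A, Dp z ∂μ := by
    intro A hA
    rw [hNdef]
    have h1 : ∀ z, ψ z ((χ A hA).1 z) = A.indicator Dp z := by
      intro z
      by_cases hz : z ∈ A
      · rw [hχdef]
        simp only [Set.indicator_of_mem hz]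
        rw [hψeq, abs_one]
        ring
      · rw [hχdef]
        simp only [Set.indicator_of_notMem hz]
        rw [hψ0]
    simp only [h1]
    exact integral_indicator hA
  have hNχ_low : ∀ A (hA : MeasurableSet A), N (-(χ A hA)) = -∫ z in A, Dm z ∂μ := by
    intro A hA
    rw [hNdef]
    have h1 : ∀ z, ψ z ((-(χ A hA)).1 z) = A.indicator (fun z => -Dm z) z := by
      intro z
      by_cases hz : z ∈ A
      · rw [hχdef]
        simp only [Submodule.coe_neg, Pi.neg_apply, Set.indicator_of_mem hz]
        rw [hψeq, abs_neg, abs_one]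
        ring
      · rw [hχdef]
        simp only [Submodule.coe_neg, Pi.neg_apply, Set.indicator_of_notMem hz]
        rw [neg_zero, hψ0]
    simp only [h1]
    rw [integral_indicator hA]
    exact integral_neg _
  have hDpint : Integrable Dp μ := hbint Dp c hDpm hDpb
  have hDmint : Integrable Dm μ := hbint Dm c hDmm hDmb
  have hup : ∀ᵐ z ∂μ, h₁ z ≤ Dp z := by
    have h1 : 0 ≤ᵐ[μ] fun z => Dp z - h₁ z := by
      refine ae_nonneg_of_forall_setIntegral_nonneg (hDpint.sub hint_h₁) fun A hA _ => ?_
      rw [integral_sub hDpint.integrableOn hint_h₁.integrableOn, hseth A hA, sub_nonneg]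
      exact (hGN _).trans (le_of_eq (hNχ_up A hA))
    filter_upwards [h1] with z hz
    simpa using hz
  have hlow : ∀ᵐ z ∂μ, Dm z ≤ h₁ z := by
    have h1 : 0 ≤ᵐ[μ] fun z => h₁ z - Dm z := by
      refine ae_nonneg_of_forall_setIntegral_nonneg (hint_h₁.sub hDmint) fun A hA _ => ?_
      rw [integral_sub hint_h₁.integrableOn hDmint.integrableOn, hseth A hA, sub_nonneg]
      have h2 := (hGN (-(χ A hA))).trans (le_of_eq (hNχ_low A hA))
      rw [map_neg] at h2
      linarith
    filter_upwards [h1] with z hz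
    simpa using hz
  -- conclusion
  set h : Z → ℝ := fun z => if Dm z ≤ h₁ z ∧ h₁ z ≤ Dp z then h₁ z else Dp z with hhdef
  have hhm : Measurable h := by
    refine Measurable.ite ?_ hh₁m hDpm
    have : {z | Dm z ≤ h₁ z ∧ h₁ z ≤ Dp z} = {z | Dm z ≤ h₁ z} ∩ {z | h₁ z ≤ Dp z} := rfl
    rw [this]
    exact (measurableSet_le hDmm hh₁m).inter (measurableSet_le hh₁m hDpm)
  have hbetween : ∀ z, Dm z ≤ h z ∧ h z ≤ Dp z := by
    intro z
    rw [hhdef]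
    simp only
    split_ifs with hz
    · exact hz
    · exact ⟨hDmDp z, le_rfl⟩
  have haeeq : h =ᵐ[μ] h₁ := by
    filter_upwards [hlow, hup] with z hz1 hz2
    rw [hhdef]
    simp only
    rw [if_pos ⟨hz1, hz2⟩]
  have habsh : ∀ z, |h z| ≤ c := by
    intro z
    rw [abs_le]
    constructor
    · linarith [(hbetween z).1, (abs_le.1 (hDmb z)).1]
    · linarith [(hbetween z).2, (abs_le.1 (hDpb z)).2]
  have hΨint : Integrable (fun z => h z • Ψ z) μ := by
    refine ⟨(hhm.smul hΨ).aestronglyMeasurable, HasFiniteIntegral.of_bounded (C := c * kb)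
      (ae_of_all _ fun z => ?_)⟩
    rw [norm_smul, Real.norm_eq_abs]
    have hkb0 : 0 ≤ kb := le_trans (norm_nonneg _) (hkb z)
    calc |h z| * ‖Ψ z‖ ≤ c * ‖Ψ z‖ := mul_le_mul_of_nonneg_right (habsh z) (norm_nonneg _)
      _ ≤ c * kb := mul_le_mul_of_nonneg_left (hkb z) hc
  refine ⟨h, hhm, hbetween, ?_⟩
  refine ext_inner_left ℝ fun g => ?_
  rw [← integral_inner hΨint g]
  calc ∫ z, ⟪g, h z • Ψ z⟫ ∂μ = ∫ z, h z * ⟪g, Ψ z⟫ ∂μ := by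
        refine integral_congr_ae (ae_of_all _ fun z => ?_)
        simp only [real_inner_smul_right]
    _ = ∫ z, h₁ z * ⟪g, Ψ z⟫ ∂μ := by
        refine integral_congr_ae ?_
        filter_upwards [haeeq] with z hz
        simp only [hz]
    _ = G (T g) := hB (T g)
    _ = ⟪g, w⟫ := by rw [hGT g, real_inner_comm]



/-- **Representer theorem for regularized pairwise learning.** Let `L` be convex in its fifth
argument and Lipschitz with constant `|L|₁ = c`, let `H` be a separable Hilbert space with
bounded measurable feature map `Φ` (`‖Φ(x,x')‖ ≤ kb`), `λ > 0` and let `f_P` minimize the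
regularized shifted risk for `P`. Then there is a bounded measurable `h : (X×Y)² → ℝ` with:
(i) `h` is a pointwise subgradient selection of `L*` along `f̂_P`;
(ii) `f_P = -(2λ)⁻¹ ∫ h ⬝ Φ d(P⊗P)`;
(iii) `|h| ≤ |L|₁`; and
(iv) for every probability measure `Q` with minimizer `f_Q`,
`‖f_P - f_Q‖ ≤ λ⁻¹ ‖∫ h Φ d(P⊗P) - ∫ h Φ d(Q⊗Q)‖`. -/
theorem representer_theorem
    {X Y H : Type*} [MeasurableSpace X] [MeasurableSpace Y]
    [NormedAddCommGroup H] [InnerProductSpace ℝ H] [CompleteSpace H]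
    [TopologicalSpace.SeparableSpace H] [MeasurableSpace H] [BorelSpace H]
    (L : X → Y → X → Y → ℝ → ℝ)
    (hL_meas : Measurable fun p : (X × Y) × (X × Y) × ℝ => L p.1.1 p.1.2 p.2.1.1 p.2.1.2 p.2.2)
    (hL_nonneg : ∀ x y x' y' t, 0 ≤ L x y x' y' t)
    (hL_convex : ∀ x y x' y', ConvexOn ℝ Set.univ (L x y x' y'))
    (c : ℝ) (hc : 0 ≤ c)
    (hL_lip : ∀ x y x' y' s t, |L x y x' y' t - L x y x' y' s| ≤ c * |t - s|)
    (Φ : X × X → H) (hΦ : Measurable Φ)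
    (kb : ℝ) (hkb : ∀ p : X × X, ‖Φ p‖ ≤ kb)
    (P : Measure (X × Y)) [IsProbabilityMeasure P]
    (lam : ℝ) (hlam : 0 < lam)
    (fP : H) (hfP : ∀ g : H, regRisk L Φ P lam fP ≤ regRisk L Φ P lam g) :
    ∃ h : (X × Y) × (X × Y) → ℝ, Measurable h ∧
      (∀ (x : X) (y : Y) (x' : X) (y' : Y) (v : ℝ),
        h ((x, y), (x', y')) * (v - fhat Φ fP (x, x'))
          ≤ (L x y x' y' v - L x y x' y' 0)
            - (L x y x' y' (fhat Φ fP (x, x')) - L x y x' y' 0)) ∧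
      fP = (-(2 * lam)⁻¹) • ∫ z : (X × Y) × (X × Y), h z • Φ (z.1.1, z.2.1) ∂(P.prod P) ∧
      (∀ z : (X × Y) × (X × Y), |h z| ≤ c) ∧
      (∀ Q : Measure (X × Y), IsProbabilityMeasure Q → ∀ fQ : H,
        (∀ g : H, regRisk L Φ Q lam fQ ≤ regRisk L Φ Q lam g) →
        ‖fP - fQ‖ ≤ lam⁻¹ *
          ‖(∫ z : (X × Y) × (X × Y), h z • Φ (z.1.1, z.2.1) ∂(P.prod P))
            - ∫ z : (X × Y) × (X × Y), h z • Φ (z.1.1, z.2.1) ∂(Q.prod Q)‖) := by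
  classical
  rcases eq_or_lt_of_le hc with hc0 | hcpos
  · -- degenerate case `c = 0` : `L` does not depend on its last argument
    have hLc : ∀ x y x' y' t, L x y x' y' t = L x y x' y' 0 := by
      intro x y x' y' t
      have h1 := hL_lip x y x' y' 0 t
      rw [← hc0, zero_mul] at h1
      exact sub_eq_zero.1 (abs_nonpos_iff.1 h1)
    have hSR : ∀ (m : Measure (X × Y)) (f : X × X → ℝ), shiftedRisk L m f = 0 := by
      intro m f
      have h1 : ∀ z : (X × Y) × (X × Y),
          L z.1.1 z.1.2 z.2.1 z.2.2 (f (z.1.1, z.2.1)) - L z.1.1 z.1.2 z.2.1 z.2.2 0 = 0 := by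
        intro z; rw [hLc]; ring
      unfold shiftedRisk
      simp only [h1, integral_zero]
    have hmin0 : ∀ (m : Measure (X × Y)) (fm : H),
        (∀ g : H, regRisk L Φ m lam fm ≤ regRisk L Φ m lam g) → fm = 0 := by
      intro m fm hm
      have h1 := hm 0
      unfold regRisk at h1
      rw [hSR, hSR] at h1
      simp only [norm_zero] at h1
      have h2 : ‖fm‖^2 ≤ 0 := le_of_mul_le_mul_left (by nlinarith) hlam
      have h3 : ‖fm‖ ≤ 0 := by nlinarith [norm_nonneg fm]
      exact norm_le_zero_iff.1 h3
    have hfP0 : fP = 0 := hmin0 P fP hfP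
    refine ⟨fun _ => 0, measurable_const, ?_, ?_, ?_, ?_⟩
    · intro x y x' y' v
      rw [zero_mul, hLc x y x' y' v, hLc x y x' y' (fhat Φ fP (x, x'))]
      simp
    · rw [hfP0]
      simp
    · intro z
      rw [← hc0]
      simp
    · intro Q hQ fQ hfQ
      rw [hfP0, hmin0 Q fQ hfQ]
      simp
  · -- main case `0 < c`
    have hlam0 : lam ≠ 0 := ne_of_gt hlam
    haveI : SecondCountableTopology H := UniformSpace.secondCountable_of_separable H
    have hπ : Measurable (fun z : (X × Y) × (X × Y) => ((z.1.1, z.2.1) : X × X)) :=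
      (measurable_fst.comp measurable_fst).prodMk (measurable_fst.comp measurable_snd)
    have hΨm : Measurable (fun z : (X × Y) × (X × Y) => Φ (z.1.1, z.2.1)) := hΦ.comp hπ
    have hfhat_m : ∀ f : H, Measurable (fun z : (X × Y) × (X × Y) => fhat Φ f (z.1.1, z.2.1)) :=
      fun f => measurable_const.inner hΨm
    have hfhat_b : ∀ (f : H) (p : X × X), |fhat Φ f p| ≤ ‖f‖ * kb := by
      intro f p
      calc |fhat Φ f p| ≤ ‖f‖ * ‖Φ p‖ := abs_real_inner_le_norm f (Φ p)
        _ ≤ ‖f‖ * kb := mul_le_mul_of_nonneg_left (hkb p) (norm_nonneg f)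
    have hLm : ∀ {v : (X × Y) × (X × Y) → ℝ}, Measurable v →
        Measurable (fun z : (X × Y) × (X × Y) => L z.1.1 z.1.2 z.2.1 z.2.2 (v z)) := by
      intro v hv
      exact hL_meas.comp (measurable_fst.prodMk (measurable_snd.prodMk hv))
    have hbintm : ∀ (ν : Measure ((X × Y) × (X × Y))), IsFiniteMeasure ν →
        ∀ (v : (X × Y) × (X × Y) → ℝ) (M : ℝ), Measurable v → (∀ z, |v z| ≤ M) →
          Integrable v ν := by
      intro ν hν v M hv hM
      haveI := hν
      exact ⟨hv.aestronglyMeasurable,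
        HasFiniteIntegral.of_bounded (C := M) (ae_of_all _ fun z => by simpa using hM z)⟩
    have hint_sh : ∀ (ν : Measure ((X × Y) × (X × Y))), IsFiniteMeasure ν → ∀ (f : H),
        Integrable (fun z : (X × Y) × (X × Y) =>
          L z.1.1 z.1.2 z.2.1 z.2.2 (fhat Φ f (z.1.1, z.2.1)) - L z.1.1 z.1.2 z.2.1 z.2.2 0) ν := by
      intro ν hν f
      refine hbintm ν hν _ (c * (‖f‖ * kb)) ((hLm (hfhat_m f)).sub (hLm measurable_const))
        fun z => ?_
      have h1 := hL_lip z.1.1 z.1.2 z.2.1 z.2.2 0 (fhat Φ f (z.1.1, z.2.1))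
      rw [sub_zero] at h1
      exact h1.trans (mul_le_mul_of_nonneg_left (hfhat_b f _) hc)
    have hφc : ∀ z : (X × Y) × (X × Y), ConvexOn ℝ Set.univ (L z.1.1 z.1.2 z.2.1 z.2.2) :=
      fun z => hL_convex _ _ _ _
    have hφl : ∀ (z : (X × Y) × (X × Y)) (s t : ℝ),
        |L z.1.1 z.1.2 z.2.1 z.2.2 t - L z.1.1 z.1.2 z.2.1 z.2.2 s| ≤ c * |t - s| :=
      fun z => hL_lip _ _ _ _
    set t0 : (X × Y) × (X × Y) → ℝ := fun z => fhat Φ fP (z.1.1, z.2.1) with ht0def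
    have ht0m : Measurable t0 := hfhat_m fP
    have ht0b : ∀ z, |t0 z| ≤ ‖fP‖ * kb := fun z => hfhat_b fP _
    set Dpz : (X × Y) × (X × Y) → ℝ := fun z => Dplus (L z.1.1 z.1.2 z.2.1 z.2.2) (t0 z)
      with hDpzdef
    set Dmz : (X × Y) × (X × Y) → ℝ := fun z => Dminus (L z.1.1 z.1.2 z.2.1 z.2.2) (t0 z)
      with hDmzdef
    have hDpzm : Measurable Dpz := by
      rw [hDpzdef]
      refine measurable_of_tendsto_metrizable
        (f := fun n z => rsl (L z.1.1 z.1.2 z.2.1 z.2.2) (t0 z) (t0 z + 1/((n:ℝ)+1)))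
        (fun n => ?_) ?_
      · unfold rsl
        exact ((hLm (ht0m.add_const _)).sub (hLm ht0m)).div ((ht0m.add_const _).sub ht0m)
      · rw [tendsto_pi_nhds]
        intro z
        exact tendsto_rsl_Dplus (hφc z) (hφl z) (s := fun n => 1/((n:ℝ)+1))
          (fun n => by positivity) tendsto_one_div_add_atTop_nhds_zero_nat
    have hDmzm : Measurable Dmz := by
      rw [hDmzdef]
      refine measurable_of_tendsto_metrizable
        (f := fun n z => rsl (L z.1.1 z.1.2 z.2.1 z.2.2) (t0 z) (t0 z - 1/((n:ℝ)+1)))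
        (fun n => ?_) ?_
      · unfold rsl
        exact ((hLm (ht0m.sub_const _)).sub (hLm ht0m)).div ((ht0m.sub_const _).sub ht0m)
      · rw [tendsto_pi_nhds]
        intro z
        exact tendsto_rsl_Dminus (hφc z) (hφl z) (s := fun n => 1/((n:ℝ)+1))
          (fun n => by positivity) tendsto_one_div_add_atTop_nhds_zero_nat
    have hDpzb : ∀ z, |Dpz z| ≤ c := by
      intro z
      simp only [hDpzdef]
      exact abs_Dplus_le (hφc z) (hφl z)
    have hDmzb : ∀ z, |Dmz z| ≤ c := by
      intro z
      simp only [hDmzdef]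
      exact abs_Dminus_le (hφc z) (hφl z)
    have hDmDpz : ∀ z, Dmz z ≤ Dpz z := by
      intro z
      simp only [hDpzdef, hDmzdef]
      exact Dminus_le_Dplus (hφc z) (hφl z)
    -- the key first-order optimality inequality
    have key : ∀ g : H, ⟪(-(2*lam)) • fP, g⟫ ≤ ∫ z : (X × Y) × (X × Y),
        (max (⟪g, Φ (z.1.1, z.2.1)⟫) 0 * Dpz z + min (⟪g, Φ (z.1.1, z.2.1)⟫) 0 * Dmz z)
          ∂(P.prod P) := by
      intro g
      set u : (X × Y) × (X × Y) → ℝ := fun z => ⟪g, Φ (z.1.1, z.2.1)⟫ with hudef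
      have hum : Measurable u := measurable_const.inner hΨm
      have hub : ∀ z, |u z| ≤ ‖g‖ * kb := fun z => hfhat_b g _
      have hI0 : Integrable (fun z : (X × Y) × (X × Y) =>
          L z.1.1 z.1.2 z.2.1 z.2.2 (t0 z) - L z.1.1 z.1.2 z.2.1 z.2.2 0) (P.prod P) := by
        refine hbintm _ inferInstance _ (c * (‖fP‖ * kb))
          ((hLm ht0m).sub (hLm measurable_const)) fun z => ?_
        have h1 := hφl z 0 (t0 z)
        rw [sub_zero] at h1
        exact h1.trans (mul_le_mul_of_nonneg_left (ht0b z) hc)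
      have hstep : ∀ n : ℕ, ⟪(-(2*lam)) • fP, g⟫ ≤
          (∫ z : (X × Y) × (X × Y), (L z.1.1 z.1.2 z.2.1 z.2.2 (t0 z + u z/((n:ℝ)+1))
            - L z.1.1 z.1.2 z.2.1 z.2.2 (t0 z)) * ((n:ℝ)+1) ∂(P.prod P))
            + lam * (1/((n:ℝ)+1)) * ‖g‖^2 := by
        intro n
        have hn1 : (0:ℝ) < (n:ℝ)+1 := by positivity
        set t : ℝ := 1/((n:ℝ)+1) with htdef
        have ht : 0 < t := by rw [htdef]; positivity
        have ht1 : t ≤ 1 := by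
          rw [htdef, div_le_one hn1]
          linarith [Nat.cast_nonneg (α := ℝ) n]
        have hIt : Integrable (fun z : (X × Y) × (X × Y) =>
            L z.1.1 z.1.2 z.2.1 z.2.2 (t0 z + t * u z) - L z.1.1 z.1.2 z.2.1 z.2.2 0)
            (P.prod P) := by
          refine hbintm _ inferInstance _ (c * (‖fP‖ * kb + ‖g‖ * kb))
            ((hLm (ht0m.add (hum.const_mul t))).sub (hLm measurable_const)) fun z => ?_
          have h1 := hφl z 0 (t0 z + t * u z)
          rw [sub_zero] at h1
          refine h1.trans (mul_le_mul_of_nonneg_left ?_ hc)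
          calc |t0 z + t * u z| ≤ |t0 z| + |t * u z| := abs_add_le _ _
            _ ≤ ‖fP‖ * kb + ‖g‖ * kb := by
                rw [abs_mul, abs_of_pos ht]
                have h2 := hub z
                have h3 := ht0b z
                nlinarith [abs_nonneg (u z)]
        have hdiff : Integrable (fun z : (X × Y) × (X × Y) =>
            L z.1.1 z.1.2 z.2.1 z.2.2 (t0 z + t * u z) - L z.1.1 z.1.2 z.2.1 z.2.2 (t0 z))
            (P.prod P) := by
          have h1 := hIt.sub hI0
          refine h1.congr (ae_of_all _ fun z => ?_)
          simp only [Pi.sub_apply]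
          ring
        have hsr : shiftedRisk L P (fhat Φ (fP + t • g))
            = ∫ z : (X × Y) × (X × Y), (L z.1.1 z.1.2 z.2.1 z.2.2 (t0 z + t * u z)
              - L z.1.1 z.1.2 z.2.1 z.2.2 0) ∂(P.prod P) := by
          unfold shiftedRisk
          refine integral_congr_ae (ae_of_all _ fun z => ?_)
          have h2 : fhat Φ (fP + t • g) (z.1.1, z.2.1) = t0 z + t * u z := by
            simp only [ht0def, hudef, fhat, inner_add_left, real_inner_smul_left]
          dsimp only
          rw [h2]
        have hsr0 : shiftedRisk L P (fhat Φ fP)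
            = ∫ z : (X × Y) × (X × Y), (L z.1.1 z.1.2 z.2.1 z.2.2 (t0 z)
              - L z.1.1 z.1.2 z.2.1 z.2.2 0) ∂(P.prod P) := by
          unfold shiftedRisk
          refine integral_congr_ae (ae_of_all _ fun z => ?_)
          dsimp only
        have hsplit : (∫ z : (X × Y) × (X × Y), (L z.1.1 z.1.2 z.2.1 z.2.2 (t0 z + t * u z)
              - L z.1.1 z.1.2 z.2.1 z.2.2 0) ∂(P.prod P))
            = (∫ z : (X × Y) × (X × Y), (L z.1.1 z.1.2 z.2.1 z.2.2 (t0 z + t * u z)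
              - L z.1.1 z.1.2 z.2.1 z.2.2 (t0 z)) ∂(P.prod P))
              + ∫ z : (X × Y) × (X × Y), (L z.1.1 z.1.2 z.2.1 z.2.2 (t0 z)
              - L z.1.1 z.1.2 z.2.1 z.2.2 0) ∂(P.prod P) := by
          rw [← integral_add hdiff hI0]
          refine integral_congr_ae (ae_of_all _ fun z => ?_)
          dsimp only
          ring
        have hnorm : ‖fP + t • g‖^2 = ‖fP‖^2 + 2*t*⟪fP, g⟫ + t^2*‖g‖^2 := by
          rw [norm_add_sq_real, real_inner_smul_right, norm_smul, Real.norm_eq_abs,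
            abs_of_pos ht, mul_pow]
          ring
        have hmin := hfP (fP + t • g)
        unfold regRisk at hmin
        rw [hsr, hsplit, hsr0, hnorm] at hmin
        have h8 : 0 ≤ (∫ z : (X × Y) × (X × Y), (L z.1.1 z.1.2 z.2.1 z.2.2 (t0 z + t * u z)
            - L z.1.1 z.1.2 z.2.1 z.2.2 (t0 z)) ∂(P.prod P))
            + lam*(2*t*⟪fP, g⟫ + t^2*‖g‖^2) := by nlinarith [hmin]
        have hconv2 : (∫ z : (X × Y) × (X × Y), (L z.1.1 z.1.2 z.2.1 z.2.2 (t0 z + t * u z)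
              - L z.1.1 z.1.2 z.2.1 z.2.2 (t0 z)) ∂(P.prod P))
            = ∫ z : (X × Y) × (X × Y), (L z.1.1 z.1.2 z.2.1 z.2.2 (t0 z + u z/((n:ℝ)+1))
              - L z.1.1 z.1.2 z.2.1 z.2.2 (t0 z)) ∂(P.prod P) := by
          refine integral_congr_ae (ae_of_all _ fun z => ?_)
          dsimp only
          rw [htdef, one_div_mul_eq_div]
        rw [hconv2] at h8
        have hinner : ⟪(-(2*lam)) • fP, g⟫ = -(2*lam) * ⟪fP, g⟫ := real_inner_smul_left _ _ _
        have hdq : (∫ z : (X × Y) × (X × Y), (L z.1.1 z.1.2 z.2.1 z.2.2 (t0 z + u z/((n:ℝ)+1))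
            - L z.1.1 z.1.2 z.2.1 z.2.2 (t0 z)) * ((n:ℝ)+1) ∂(P.prod P))
            = (∫ z : (X × Y) × (X × Y), (L z.1.1 z.1.2 z.2.1 z.2.2 (t0 z + u z/((n:ℝ)+1))
            - L z.1.1 z.1.2 z.2.1 z.2.2 (t0 z)) ∂(P.prod P)) * ((n:ℝ)+1) :=
          integral_mul_const _ _
        rw [hinner, hdq]
        set D : ℝ := ∫ z : (X × Y) × (X × Y), (L z.1.1 z.1.2 z.2.1 z.2.2 (t0 z + u z/((n:ℝ)+1))
            - L z.1.1 z.1.2 z.2.1 z.2.2 (t0 z)) ∂(P.prod P) with hDdef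
        have h9 := mul_nonneg (le_of_lt hn1) h8
        have h10 : ((n:ℝ)+1)*(D + lam*(2*t*⟪fP, g⟫ + t^2*‖g‖^2))
            = D*((n:ℝ)+1) + 2*lam*⟪fP, g⟫ + lam*t*‖g‖^2 := by
          rw [htdef]
          field_simp
          ring
        rw [h10] at h9
        rw [htdef] at h9 ⊢
        linarith
      have hlim : Tendsto (fun n : ℕ => (∫ z : (X × Y) × (X × Y),
          (L z.1.1 z.1.2 z.2.1 z.2.2 (t0 z + u z/((n:ℝ)+1))
            - L z.1.1 z.1.2 z.2.1 z.2.2 (t0 z)) * ((n:ℝ)+1) ∂(P.prod P))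
          + lam * (1/((n:ℝ)+1)) * ‖g‖^2) atTop
          (𝓝 ((∫ z : (X × Y) × (X × Y),
            (max (u z) 0 * Dpz z + min (u z) 0 * Dmz z) ∂(P.prod P)) + 0)) := by
        refine Tendsto.add ?_ ?_
        · refine tendsto_integral_of_dominated_convergence (fun _ => c * (‖g‖ * kb))
            (fun n => (((hLm (ht0m.add (hum.div_const _))).sub (hLm ht0m)).mul_const
              _).aestronglyMeasurable)
            (integrable_const _) (fun n => ae_of_all _ fun z => ?_) (ae_of_all _ fun z => ?_)
          · rw [Real.norm_eq_abs]
            refine le_trans (abs_diffquot_le (hφl z) (u z) n) ?_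
            exact mul_le_mul_of_nonneg_left (hub z) hc
          · have h1 := tendsto_diffquot (hφc z) (hφl z) (t0 := t0 z) (u z)
            rw [if_eq_maxmin] at h1
            simpa only [hDpzdef, hDmzdef] using h1
        · have h2 : Tendsto (fun n : ℕ => lam * (1/((n:ℝ)+1)) * ‖g‖^2) atTop
              (𝓝 (lam * 0 * ‖g‖^2)) :=
            (tendsto_one_div_add_atTop_nhds_zero_nat.const_mul lam).mul_const _
          simpa using h2
      have hfin := ge_of_tendsto' hlim hstep
      simpa using hfin
    obtain ⟨h, hhm, hbet, hintEq⟩ := exists_density_subgradient (P.prod P)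
      (fun z : (X × Y) × (X × Y) => Φ (z.1.1, z.2.1)) hΨm kb (fun z => hkb _) c hc
      Dmz Dpz hDmzm hDpzm hDmzb hDpzb hDmDpz ((-(2*lam)) • fP) key
    have habs : ∀ z, |h z| ≤ c := fun z => abs_le.2
      ⟨by linarith [(hbet z).1, (abs_le.1 (hDmzb z)).1],
       by linarith [(hbet z).2, (abs_le.1 (hDpzb z)).2]⟩
    have hintH : ∀ (ν : Measure ((X × Y) × (X × Y))), IsFiniteMeasure ν →
        Integrable (fun z : (X × Y) × (X × Y) => h z • Φ (z.1.1, z.2.1)) ν := by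
      intro ν hν
      haveI := hν
      refine ⟨(hhm.smul hΨm).aestronglyMeasurable,
        HasFiniteIntegral.of_bounded (C := c * kb) (ae_of_all _ fun z => ?_)⟩
      rw [norm_smul, Real.norm_eq_abs]
      calc |h z| * ‖Φ (z.1.1, z.2.1)‖ ≤ c * ‖Φ (z.1.1, z.2.1)‖ :=
            mul_le_mul_of_nonneg_right (habs z) (norm_nonneg _)
        _ ≤ c * kb := mul_le_mul_of_nonneg_left (hkb _) hc
    have hA_P : (∫ z : (X × Y) × (X × Y), h z • Φ (z.1.1, z.2.1) ∂(P.prod P))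
        = (-(2*lam)) • fP := hintEq
    have hiiP : fP = (-(2 * lam)⁻¹) • ∫ z : (X × Y) × (X × Y), h z • Φ (z.1.1, z.2.1)
        ∂(P.prod P) := by
      rw [hA_P, smul_smul, show (-(2*lam)⁻¹) * (-(2*lam)) = 1 by field_simp, one_smul]
    refine ⟨h, hhm, ?_, hiiP, habs, ?_⟩
    · -- (i) pointwise subgradient property
      intro x y x' y' v
      have hb1 := (hbet ((x,y),(x',y'))).1
      have hb2 := (hbet ((x,y),(x',y'))).2
      simp only [hDmzdef, hDpzdef, ht0def] at hb1 hb2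
      have hsg := subgrad_of_between (hφc ((x,y),(x',y'))) (hφl ((x,y),(x',y'))) hb1 hb2 v
      dsimp only at hsg ⊢
      linarith
    · -- (iv) stability bound
      intro Q hQ fQ hfQ
      haveI := hQ
      have hsubQ : shiftedRisk L Q (fhat Φ fP)
          + ⟪fQ - fP, ∫ z : (X × Y) × (X × Y), h z • Φ (z.1.1, z.2.1) ∂(Q.prod Q)⟫
          ≤ shiftedRisk L Q (fhat Φ fQ) := by
        have hinn : ⟪fQ - fP, ∫ z : (X × Y) × (X × Y), h z • Φ (z.1.1, z.2.1) ∂(Q.prod Q)⟫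
            = ∫ z : (X × Y) × (X × Y), h z * ⟪fQ - fP, Φ (z.1.1, z.2.1)⟫ ∂(Q.prod Q) := by
          rw [← integral_inner (hintH (Q.prod Q) inferInstance) (fQ - fP)]
          refine integral_congr_ae (ae_of_all _ fun z => ?_)
          simp only [real_inner_smul_right]
        have hmul_int2 : Integrable
            (fun z : (X × Y) × (X × Y) => h z * ⟪fQ - fP, Φ (z.1.1, z.2.1)⟫) (Q.prod Q) := by
          refine hbintm _ inferInstance _ (c * (‖fQ - fP‖ * kb))
            (hhm.mul (measurable_const.inner hΨm)) fun z => ?_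
          rw [abs_mul]
          exact mul_le_mul (habs z) (hfhat_b (fQ - fP) _) (abs_nonneg _) hc
        rw [hinn]
        have e1 : shiftedRisk L Q (fhat Φ fP) = ∫ z : (X × Y) × (X × Y),
            (L z.1.1 z.1.2 z.2.1 z.2.2 (fhat Φ fP (z.1.1, z.2.1))
              - L z.1.1 z.1.2 z.2.1 z.2.2 0) ∂(Q.prod Q) := rfl
        have e2 : shiftedRisk L Q (fhat Φ fQ) = ∫ z : (X × Y) × (X × Y),
            (L z.1.1 z.1.2 z.2.1 z.2.2 (fhat Φ fQ (z.1.1, z.2.1))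
              - L z.1.1 z.1.2 z.2.1 z.2.2 0) ∂(Q.prod Q) := rfl
        rw [e1, e2, ← integral_add (hint_sh (Q.prod Q) inferInstance fP) hmul_int2]
        refine integral_mono ((hint_sh (Q.prod Q) inferInstance fP).add hmul_int2)
          (hint_sh (Q.prod Q) inferInstance fQ) fun z => ?_
        have hb1 := (hbet z).1
        have hb2 := (hbet z).2
        simp only [hDmzdef, hDpzdef, ht0def] at hb1 hb2
        have hsg := subgrad_of_between (hφc z) (hφl z) hb1 hb2 (fhat Φ fQ (z.1.1, z.2.1))
        have hid : ⟪fQ - fP, Φ (z.1.1, z.2.1)⟫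
            = fhat Φ fQ (z.1.1, z.2.1) - fhat Φ fP (z.1.1, z.2.1) := by
          simp [fhat, inner_sub_left]
        dsimp only
        rw [hid]
        linarith
      have hm2 := hfQ fP
      unfold regRisk at hm2
      have hCS : ⟪fQ - fP, (∫ z : (X × Y) × (X × Y), h z • Φ (z.1.1, z.2.1) ∂(P.prod P))
            - ∫ z : (X × Y) × (X × Y), h z • Φ (z.1.1, z.2.1) ∂(Q.prod Q)⟫
          ≤ ‖fQ - fP‖ * ‖(∫ z : (X × Y) × (X × Y), h z • Φ (z.1.1, z.2.1) ∂(P.prod P))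
            - ∫ z : (X × Y) × (X × Y), h z • Φ (z.1.1, z.2.1) ∂(Q.prod Q)‖ :=
        real_inner_le_norm _ _
      have hinner1 : ⟪fQ - fP, ∫ z : (X × Y) × (X × Y), h z • Φ (z.1.1, z.2.1) ∂(P.prod P)⟫
          = -(2*lam) * ⟪fP, fQ - fP⟫ := by
        rw [hA_P, real_inner_smul_right, real_inner_comm]
      have hsub2 : ⟪fQ - fP, ∫ z : (X × Y) × (X × Y), h z • Φ (z.1.1, z.2.1) ∂(Q.prod Q)⟫
          = ⟪fQ - fP, ∫ z : (X × Y) × (X × Y), h z • Φ (z.1.1, z.2.1) ∂(P.prod P)⟫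
            - ⟪fQ - fP, (∫ z : (X × Y) × (X × Y), h z • Φ (z.1.1, z.2.1) ∂(P.prod P))
              - ∫ z : (X × Y) × (X × Y), h z • Φ (z.1.1, z.2.1) ∂(Q.prod Q)⟫ := by
        rw [inner_sub_right]
        ring
      have hnid : lam * ‖fQ‖^2 = lam * ‖fP‖^2 + 2*lam*⟪fP, fQ - fP⟫ + lam * ‖fQ - fP‖^2 := by
        have h2 := norm_add_sq_real fP (fQ - fP)
        rw [show fP + (fQ - fP) = fQ from by abel] at h2
        rw [h2]
        ring
      have hfinal : lam * ‖fQ - fP‖^2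
          ≤ ⟪fQ - fP, (∫ z : (X × Y) × (X × Y), h z • Φ (z.1.1, z.2.1) ∂(P.prod P))
            - ∫ z : (X × Y) × (X × Y), h z • Φ (z.1.1, z.2.1) ∂(Q.prod Q)⟫ := by
        linarith [hsubQ, hm2, hsub2, hinner1, hnid]
      rcases eq_or_lt_of_le (norm_nonneg (fQ - fP)) with h0 | h0
      · rw [norm_sub_rev, ← h0]
        positivity
      · have h1 : lam * ‖fQ - fP‖ ≤ ‖(∫ z : (X × Y) × (X × Y), h z • Φ (z.1.1, z.2.1)
            ∂(P.prod P)) - ∫ z : (X × Y) × (X × Y), h z • Φ (z.1.1, z.2.1) ∂(Q.prod Q)‖ := by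
          have h2 : lam * ‖fQ - fP‖ * ‖fQ - fP‖
              ≤ ‖(∫ z : (X × Y) × (X × Y), h z • Φ (z.1.1, z.2.1) ∂(P.prod P))
                - ∫ z : (X × Y) × (X × Y), h z • Φ (z.1.1, z.2.1) ∂(Q.prod Q)‖ * ‖fQ - fP‖ := by
            calc lam * ‖fQ - fP‖ * ‖fQ - fP‖ = lam * ‖fQ - fP‖^2 := by ring
              _ ≤ _ := hfinal
              _ ≤ ‖fQ - fP‖ * _ := hCS
              _ = _ := by ring
          exact le_of_mul_le_mul_right h2 h0
        rw [norm_sub_rev fP fQ]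
        calc ‖fQ - fP‖ = lam⁻¹ * (lam * ‖fQ - fP‖) := by field_simp
          _ ≤ _ := mul_le_mul_of_nonneg_left h1 (inv_nonneg.2 hlam.le)
end

section
/- Let L be a pairwise loss function that is Lipschitz continuous with constant |L|₁, differentiable in its fifth argument with derivative D₅L, let Φ : X×X → H be measurable with ‖k‖_∞ := sup ‖Φ(x,x')‖_H < ∞, P a Borel probability measure on X×Y, λ > 0, and let f_P ∈ H be any minimizer of the regularized shifted risk R^reg_{L*,P,λ} over H. Then for every g ∈ H, ∫ D₅L(x,y,x',y',f̂_P(x,x'))·ĝ(x,x') d(P⊗P)(x,y,x',y') + 2λ·⟪f_P, g⟫_H = 0. -/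
open MeasureTheory Filter Topology

-- derivative of a Lipschitz function is bounded
lemma deriv_abs_le_of_lip {f : ℝ → ℝ} {f' t c : ℝ} (h : HasDerivAt f f' t)
    (hl : ∀ s u, |f u - f s| ≤ c * |u - s|) : |f'| ≤ c := by
  have hs : Tendsto (slope f t) (𝓝[≠] t) (𝓝 f') := hasDerivAt_iff_tendsto_slope.mp h
  have habs : Tendsto (fun u => |slope f t u|) (𝓝[≠] t) (𝓝 |f'|) := hs.abs
  refine le_of_tendsto habs ?_
  filter_upwards [self_mem_nhdsWithin] with u hu
  have hu' : u - t ≠ 0 := sub_ne_zero.mpr hu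
  rw [slope_def_field, div_eq_mul_inv, abs_mul, abs_inv]
  calc |f u - f t| * |u - t|⁻¹ ≤ (c * |u - t|) * |u - t|⁻¹ := by
        gcongr; exact hl t u
    _ = c := by field_simp

-- slope limit along a sequence
lemma tendsto_seq_deriv {f : ℝ → ℝ} {f' t : ℝ} (h : HasDerivAt f f' t) :
    Tendsto (fun n : ℕ => ((n : ℝ) + 1) * (f (t + 1 / ((n : ℝ) + 1)) - f t)) atTop (𝓝 f') := by
  have hs : Tendsto (slope f t) (𝓝[≠] t) (𝓝 f') := hasDerivAt_iff_tendsto_slope.mp h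
  have hseq : Tendsto (fun n : ℕ => t + 1 / ((n : ℝ) + 1)) atTop (𝓝[≠] t) := by
    refine tendsto_nhdsWithin_of_tendsto_nhds_of_eventually_within _ ?_ ?_
    · have := tendsto_one_div_add_atTop_nhds_zero_nat (𝕜 := ℝ)
      simpa using (tendsto_const_nhds (α := ℕ) (x := t)).add this
    · refine Eventually.of_forall fun n => ?_
      have : (0:ℝ) < 1 / ((n : ℝ) + 1) := by positivity
      simp only [Set.mem_compl_iff, Set.mem_singleton_iff]
      intro hcon
      nlinarith [hcon]
  have := hs.comp hseq
  refine this.congr fun n => ?_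
  have hpos : (0:ℝ) < (n : ℝ) + 1 := by positivity
  rw [Function.comp_apply, slope_def_field]
  rw [add_sub_cancel_left]
  field_simp


/-- **First-order condition for the regularized minimizer** (Lemma A.2.3). If `L` is Lipschitz
and differentiable in its fifth argument with derivative `D₅L`, the kernel is bounded, and
`f_P ∈ H` minimizes the regularized shifted risk, then for every `g ∈ H`,
`∫ D₅L(x,y,x',y',f̂_P(x,x')) ĝ(x,x') d(P⊗P) + 2λ⟪f_P, g⟫ = 0`. -/
theorem regularized_minimizer_first_order
    {X Y H : Type*} [MeasurableSpace X] [MeasurableSpace Y]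
    [NormedAddCommGroup H] [InnerProductSpace ℝ H] [CompleteSpace H]
    [MeasurableSpace H] [BorelSpace H]
    (L D₅L : X → Y → X → Y → ℝ → ℝ)
    (hL_meas : Measurable fun p : (X × Y) × (X × Y) × ℝ => L p.1.1 p.1.2 p.2.1.1 p.2.1.2 p.2.2)
    (hL_nonneg : ∀ x y x' y' t, 0 ≤ L x y x' y' t)
    (c : ℝ) (hc : 0 ≤ c)
    (hL_lip : ∀ x y x' y' s t, |L x y x' y' t - L x y x' y' s| ≤ c * |t - s|)
    (hL_deriv : ∀ x y x' y' t, HasDerivAt (L x y x' y') (D₅L x y x' y' t) t)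
    (Φ : X × X → H) (hΦ : Measurable Φ)
    (kb : ℝ) (hkb : ∀ p : X × X, ‖Φ p‖ ≤ kb)
    (P : Measure (X × Y)) [IsProbabilityMeasure P]
    (lam : ℝ) (hlam : 0 < lam)
    (fP : H) (hfP : ∀ g : H, regRisk L Φ P lam fP ≤ regRisk L Φ P lam g) :
    ∀ g : H,
      (∫ z : (X × Y) × (X × Y),
          D₅L z.1.1 z.1.2 z.2.1 z.2.2 (fhat Φ fP (z.1.1, z.2.1)) * fhat Φ g (z.1.1, z.2.1)
          ∂(P.prod P))
        + 2 * lam * (@inner ℝ H _ fP g) = 0 := by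
  intro g
  set μ := P.prod P with hμ
  -- measurability of fhat
  have hfhat : ∀ f : H, Measurable fun z : (X × Y) × (X × Y) => fhat Φ f (z.1.1, z.2.1) := by
    intro f
    exact ((Continuous.measurable (continuous_const.inner continuous_id)).comp hΦ).comp
      ((measurable_fst.fst).prodMk (measurable_snd.fst))
  have hmeasL : ∀ (φ : (X × Y) × (X × Y) → ℝ), Measurable φ →
      Measurable fun z : (X × Y) × (X × Y) => L z.1.1 z.1.2 z.2.1 z.2.2 (φ z) := by
    intro φ hφ
    exact hL_meas.comp (measurable_fst.prodMk (measurable_snd.prodMk hφ))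
  set ψ : (X × Y) × (X × Y) → ℝ := fun z => fhat Φ fP (z.1.1, z.2.1) with hψ
  set γ : (X × Y) × (X × Y) → ℝ := fun z => fhat Φ g (z.1.1, z.2.1) with hγ
  set F : ℝ → (X × Y) × (X × Y) → ℝ := fun t z =>
    L z.1.1 z.1.2 z.2.1 z.2.2 (ψ z + t * γ z) - L z.1.1 z.1.2 z.2.1 z.2.2 0 with hF
  set F' : ℝ → (X × Y) × (X × Y) → ℝ := fun t z =>
    D₅L z.1.1 z.1.2 z.2.1 z.2.2 (ψ z + t * γ z) * γ z with hF'
  have hψm : Measurable ψ := hfhat fP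
  have hγm : Measurable γ := hfhat g
  have hγb : ∀ z, |γ z| ≤ ‖g‖ * kb := by
    intro z
    calc |γ z| ≤ ‖g‖ * ‖Φ (z.1.1, z.2.1)‖ := abs_real_inner_le_norm _ _
      _ ≤ ‖g‖ * kb := by
          have := hkb (z.1.1, z.2.1)
          exact mul_le_mul_of_nonneg_left this (norm_nonneg _)
  have hψb : ∀ z, |ψ z| ≤ ‖fP‖ * kb := by
    intro z
    calc |ψ z| ≤ ‖fP‖ * ‖Φ (z.1.1, z.2.1)‖ := abs_real_inner_le_norm _ _
      _ ≤ ‖fP‖ * kb := mul_le_mul_of_nonneg_left (hkb _) (norm_nonneg _)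
  -- measurability of F t
  have hFm : ∀ t, Measurable (F t) := by
    intro t
    exact (hmeasL _ (hψm.add (hγm.const_mul t))).sub (hmeasL _ measurable_const)
  -- measurability of F' 0 via sequential limits
  have hF'0m : Measurable (F' 0) := by
    have hDm : Measurable fun z : (X × Y) × (X × Y) =>
        D₅L z.1.1 z.1.2 z.2.1 z.2.2 (ψ z + 0 * γ z) := by
      apply measurable_of_tendsto_metrizable
        (f := fun n z => ((n : ℝ) + 1) *
          (L z.1.1 z.1.2 z.2.1 z.2.2 ((ψ z + 0 * γ z) + 1 / ((n : ℝ) + 1)) -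
           L z.1.1 z.1.2 z.2.1 z.2.2 (ψ z + 0 * γ z)))
      · intro n
        exact ((hmeasL _ ((hψm.add (hγm.const_mul 0)).add measurable_const)).sub
          (hmeasL _ (hψm.add (hγm.const_mul 0)))).const_mul _
      · rw [tendsto_pi_nhds]
        intro z
        exact tendsto_seq_deriv (hL_deriv z.1.1 z.1.2 z.2.1 z.2.2 (ψ z + 0 * γ z))
    exact hDm.mul hγm
  -- boundedness of D₅L
  have hDb : ∀ x y x' y' t, |D₅L x y x' y' t| ≤ c := fun x y x' y' t =>
    deriv_abs_le_of_lip (hL_deriv x y x' y' t) (fun s u => hL_lip x y x' y' s u)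
  -- main parametric integral derivative
  have key := hasDerivAt_integral_of_dominated_loc_of_deriv_le (F := F) (F' := F')
    (μ := μ) (x₀ := (0:ℝ)) (bound := fun _ => c * (‖g‖ * kb)) (Metric.ball_mem_nhds (0:ℝ) one_pos)
    (Eventually.of_forall fun t => (hFm t).aestronglyMeasurable)
    ?_ (hF'0m.aestronglyMeasurable) ?_ (integrable_const _) ?_
  · -- conclude
    obtain ⟨-, hInt⟩ := key
    set I : ℝ := ∫ z, F' 0 z ∂μ with hI
    have hq : HasDerivAt (fun t : ℝ => lam * (‖fP‖^2 + 2 * t * (@inner ℝ H _ fP g)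
        + t^2 * ‖g‖^2)) (2 * lam * (@inner ℝ H _ fP g)) 0 := by
      have h1 : HasDerivAt (fun t : ℝ => ‖fP‖^2 + 2 * t * (@inner ℝ H _ fP g)
          + t^2 * ‖g‖^2) (2 * (@inner ℝ H _ fP g)) 0 := by
        have := ((hasDerivAt_const (0:ℝ) (‖fP‖^2)).add
          (((hasDerivAt_id' (x := (0:ℝ)))).const_mul 2 |>.mul_const (@inner ℝ H _ fP g))).add
          ((hasDerivAt_pow 2 (0:ℝ)).mul_const (‖g‖^2))
        exact this.congr_deriv (by norm_num)
      have := h1.const_mul lam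
      exact this.congr_deriv (by ring)
    have hG : HasDerivAt (fun t : ℝ => (∫ z, F t z ∂μ) + lam * (‖fP‖^2
        + 2 * t * (@inner ℝ H _ fP g) + t^2 * ‖g‖^2))
        (I + 2 * lam * (@inner ℝ H _ fP g)) 0 := hInt.add hq
    have hGeq : ∀ t : ℝ, (∫ z, F t z ∂μ) + lam * (‖fP‖^2 + 2 * t * (@inner ℝ H _ fP g)
        + t^2 * ‖g‖^2) = regRisk L Φ P lam (fP + t • g) := by
      intro t
      unfold regRisk shiftedRisk
      congr 1
      · apply integral_congr_ae
        refine Eventually.of_forall fun z => ?_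
        simp only [hF, fhat, inner_add_left, real_inner_smul_left, hψ, hγ]
      · congr 1
        rw [norm_add_sq_real, real_inner_smul_right, norm_smul]
        simp [mul_pow]
        ring
    have hmin : IsLocalMin (fun t : ℝ => (∫ z, F t z ∂μ) + lam * (‖fP‖^2
        + 2 * t * (@inner ℝ H _ fP g) + t^2 * ‖g‖^2)) 0 := by
      refine Eventually.of_forall fun t => ?_
      dsimp only
      rw [hGeq t, hGeq 0]
      simpa using hfP (fP + t • g)
    have hzero : I + 2 * lam * (@inner ℝ H _ fP g) = 0 := hmin.hasDerivAt_eq_zero hG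
    have : I = ∫ z : (X × Y) × (X × Y),
        D₅L z.1.1 z.1.2 z.2.1 z.2.2 (fhat Φ fP (z.1.1, z.2.1)) * fhat Φ g (z.1.1, z.2.1) ∂μ := by
      rw [hI]
      apply integral_congr_ae
      refine Eventually.of_forall fun z => ?_
      simp [hF', hψ, hγ]
    rw [← this]
    exact hzero
  · -- integrable (F 0)
    refine (Integrable.mono' (integrable_const (c * (‖fP‖ * kb)))
      ((hFm 0).aestronglyMeasurable) ?_)
    refine Eventually.of_forall fun z => ?_
    simp only [hF, Real.norm_eq_abs]
    calc |L z.1.1 z.1.2 z.2.1 z.2.2 (ψ z + 0 * γ z) - L z.1.1 z.1.2 z.2.1 z.2.2 0|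
        ≤ c * |(ψ z + 0 * γ z) - 0| := hL_lip _ _ _ _ _ _
      _ ≤ c * (‖fP‖ * kb) := by
          rw [zero_mul, add_zero, sub_zero]
          exact mul_le_mul_of_nonneg_left (hψb z) hc
  · -- bound on F'
    refine Eventually.of_forall fun z => fun t _ => ?_
    simp only [hF', Real.norm_eq_abs, abs_mul]
    exact mul_le_mul (hDb _ _ _ _ _) (hγb z) (abs_nonneg _) hc
  · -- differentiability
    refine Eventually.of_forall fun z => fun t _ => ?_
    have h1 : HasDerivAt (fun s : ℝ => ψ z + s * γ z) (γ z) t := by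
      simpa using ((hasDerivAt_id t).mul_const (γ z)).const_add (ψ z)
    have h2 := (hL_deriv z.1.1 z.1.2 z.2.1 z.2.2 (ψ z + t * γ z)).comp t h1
    exact (h2.sub_const (L z.1.1 z.1.2 z.2.1 z.2.2 0)).congr_deriv rfl
end

section
/- Let L be a pairwise loss function that is Lipschitz continuous with constant |L|₁ and convex in its fifth argument, let H be a separable real Hilbert space, Φ : X×X → H measurable with ‖k‖_∞ := sup ‖Φ(x,x')‖_H < ∞. Then for all λ > 0, all ε ∈ (0,1), and all Borel probability measures P, Q on X×Y, setting P_ε := (1−ε)·P + ε·Q, the minimizers of the regularized shifted risk satisfy ‖f_{L*,P,λ} − f_{L*,P_ε,λ}‖_H ≤ (8/λ)·‖k‖_∞·|L|₁·ε. -/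
open MeasureTheory

/-- Auxiliary: the shifted loss induced by `f`. -/
noncomputable def biasLoss {X Y H : Type*} [NormedAddCommGroup H] [InnerProductSpace ℝ H]
    (L : X → Y → X → Y → ℝ → ℝ) (Φ : X × X → H) (f : H) : (X × Y) × (X × Y) → ℝ :=
  fun z => L z.1.1 z.1.2 z.2.1 z.2.2 ((fhat Φ f) (z.1.1, z.2.1)) - L z.1.1 z.1.2 z.2.1 z.2.2 0

/-- Auxiliary: product of a convex combination of finite measures. -/
lemma bias_prod_mix {α : Type*} [MeasurableSpace α] (P Q : Measure α)
    [IsFiniteMeasure P] [IsFiniteMeasure Q] (a b : ENNReal) (ha : a ≠ ⊤) (hb : b ≠ ⊤) :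
    (a • P + b • Q).prod (a • P + b • Q)
      = (a*a) • P.prod P + ((a*b) • P.prod Q + ((b*a) • Q.prod P + (b*b) • Q.prod Q)) := by
  haveI : IsFiniteMeasure (a • P) := P.smul_finite ha
  haveI : IsFiniteMeasure (b • Q) := Q.smul_finite hb
  refine Measure.prod_eq fun s t hs ht => ?_
  simp only [Measure.coe_add, Pi.add_apply, Measure.smul_apply, smul_eq_mul,
    Measure.prod_prod]
  ring

/-- **Bounds for the bias** (Theorem 3.2). Let `L` be Lipschitz with constant `|L|₁ = c` and
convex in its fifth argument, `Φ` measurable and bounded by `‖k‖_∞ = kb`. For all `λ > 0`,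
`ε ∈ (0,1)` and probability measures `P, Q`, the minimizers of the regularized shifted risk
for `P` and for `P_ε = (1-ε)P + εQ` satisfy
`‖f_{L*,P,λ} - f_{L*,P_ε,λ}‖ ≤ (8/λ) ‖k‖_∞ |L|₁ ε`. -/
theorem bias_bound
    {X Y H : Type*} [MeasurableSpace X] [MeasurableSpace Y]
    [NormedAddCommGroup H] [InnerProductSpace ℝ H] [CompleteSpace H]
    [TopologicalSpace.SeparableSpace H] [MeasurableSpace H] [BorelSpace H]
    (L : X → Y → X → Y → ℝ → ℝ)
    (hL_meas : Measurable fun p : (X × Y) × (X × Y) × ℝ => L p.1.1 p.1.2 p.2.1.1 p.2.1.2 p.2.2)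
    (hL_nonneg : ∀ x y x' y' t, 0 ≤ L x y x' y' t)
    (hL_convex : ∀ x y x' y', ConvexOn ℝ Set.univ (L x y x' y'))
    (c : ℝ) (hc : 0 ≤ c)
    (hL_lip : ∀ x y x' y' s t, |L x y x' y' t - L x y x' y' s| ≤ c * |t - s|)
    (Φ : X × X → H) (hΦ : Measurable Φ)
    (kb : ℝ) (hkb : ∀ p : X × X, ‖Φ p‖ ≤ kb)
    (lam : ℝ) (hlam : 0 < lam)
    (ε : ℝ) (hε0 : 0 < ε) (hε1 : ε < 1)
    (P Q : Measure (X × Y)) [IsProbabilityMeasure P] [IsProbabilityMeasure Q]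
    (fP fPε : H)
    (hfP : ∀ g : H, regRisk L Φ P lam fP ≤ regRisk L Φ P lam g)
    (hfPε : ∀ g : H,
      regRisk L Φ (ENNReal.ofReal (1 - ε) • P + ENNReal.ofReal ε • Q) lam fPε
        ≤ regRisk L Φ (ENNReal.ofReal (1 - ε) • P + ENNReal.ofReal ε • Q) lam g) :
    ‖fP - fPε‖ ≤ (8 / lam) * kb * c * ε := by
  -- basic setup
  haveI : Nonempty (X × Y) := by
    rcases isEmpty_or_nonempty (X × Y) with h | h
    · exfalso
      have h1 : P Set.univ = 1 := measure_univ
      rw [Set.univ_eq_empty_iff.mpr h, measure_empty] at h1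
      exact one_ne_zero h1.symm
    · exact h
  obtain ⟨x0, y0⟩ := ‹Nonempty (X × Y)›.some
  have hkb0 : 0 ≤ kb := le_trans (norm_nonneg _) (hkb (x0, x0))
  -- the shifted loss of f as a function on the product space
  set ℓ : H → ((X × Y) × (X × Y)) → ℝ := biasLoss L Φ with hℓ
  have hSR : ∀ (μ : Measure (X × Y)) (f : H),
      shiftedRisk L μ (fhat Φ f) = ∫ z, ℓ f z ∂(μ.prod μ) := fun μ f => rfl
  -- measurability
  have hmeas : ∀ f : H, Measurable (ℓ f) := by
    intro f
    have hf : Measurable (fhat Φ f) :=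
      (continuous_const.inner continuous_id).measurable.comp hΦ
    have h1 : Measurable fun z : (X × Y) × (X × Y) =>
        (z.1, (z.2, (fhat Φ f) (z.1.1, z.2.1))) := by
      refine measurable_fst.prodMk (measurable_snd.prodMk ?_)
      exact hf.comp ((measurable_fst.comp measurable_fst).prodMk
        (measurable_fst.comp measurable_snd))
    have h0 : Measurable fun z : (X × Y) × (X × Y) =>
        (z.1, (z.2, (0 : ℝ))) :=
      measurable_fst.prodMk (measurable_snd.prodMk measurable_const)
    exact (hL_meas.comp h1).sub (hL_meas.comp h0)
  -- pointwise Lipschitz bound in f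
  have hlipz : ∀ (f g : H) (z : (X × Y) × (X × Y)), |ℓ f z - ℓ g z| ≤ c * kb * ‖f - g‖ := by
    intro f g z
    have h1 : ℓ f z - ℓ g z =
        L z.1.1 z.1.2 z.2.1 z.2.2 ((fhat Φ f) (z.1.1, z.2.1)) -
        L z.1.1 z.1.2 z.2.1 z.2.2 ((fhat Φ g) (z.1.1, z.2.1)) := by
      simp only [hℓ, biasLoss]; ring
    rw [h1]
    refine le_trans (hL_lip _ _ _ _ _ _) ?_
    have h2 : (fhat Φ f) (z.1.1, z.2.1) - (fhat Φ g) (z.1.1, z.2.1)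
        = @inner ℝ H _ (f - g) (Φ (z.1.1, z.2.1)) := by
      simp [fhat, inner_sub_left]
    rw [h2]
    calc c * |@inner ℝ H _ (f - g) (Φ (z.1.1, z.2.1))|
        ≤ c * (‖f - g‖ * ‖Φ (z.1.1, z.2.1)‖) :=
          mul_le_mul_of_nonneg_left (abs_real_inner_le_norm _ _) hc
      _ ≤ c * (‖f - g‖ * kb) := by
          refine mul_le_mul_of_nonneg_left ?_ hc
          exact mul_le_mul_of_nonneg_left (hkb _) (norm_nonneg _)
      _ = c * kb * ‖f - g‖ := by ring
  have hzero : ∀ z, ℓ (0 : H) z = 0 := by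
    intro z; simp [hℓ, biasLoss, fhat]
  have hbound : ∀ (f : H) (z : (X × Y) × (X × Y)), |ℓ f z| ≤ c * kb * ‖f‖ := by
    intro f z
    have := hlipz f 0 z
    simpa [hzero z] using this
  -- integrability
  have hint : ∀ (f : H) (μ : Measure ((X × Y) × (X × Y))) [IsFiniteMeasure μ],
      Integrable (ℓ f) μ := by
    intro f μ _
    refine Integrable.mono' (integrable_const (c * kb * ‖f‖))
      (hmeas f).aestronglyMeasurable ?_
    filter_upwards with z
    simpa [Real.norm_eq_abs] using hbound f z
  -- Lipschitz bound for integrals w.r.t. probability measures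
  have hrisk_lip : ∀ (f g : H) (μ : Measure ((X × Y) × (X × Y))) [IsProbabilityMeasure μ],
      |(∫ z, ℓ f z ∂μ) - ∫ z, ℓ g z ∂μ| ≤ c * kb * ‖f - g‖ := by
    intro f g μ _
    rw [← integral_sub (hint f μ) (hint g μ)]
    have h := norm_integral_le_of_norm_le_const (μ := μ)
      (f := fun z => ℓ f z - ℓ g z) (C := c * kb * ‖f - g‖) ?_
    · simpa [Real.norm_eq_abs, measure_univ] using h
    · filter_upwards with z
      simpa [Real.norm_eq_abs] using hlipz f g z
  -- convexity of the shifted risk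
  have hconv : ∀ (f g : H) (μ : Measure (X × Y)) [IsProbabilityMeasure μ],
      shiftedRisk L μ (fhat Φ ((1/2 : ℝ) • (f + g)))
        ≤ (shiftedRisk L μ (fhat Φ f) + shiftedRisk L μ (fhat Φ g)) / 2 := by
    intro f g μ _
    rw [hSR, hSR, hSR]
    have hpt : ∀ z, ℓ ((1/2 : ℝ) • (f + g)) z ≤ (ℓ f z + ℓ g z) / 2 := by
      intro z
      have hmid : (fhat Φ ((1/2 : ℝ) • (f + g))) (z.1.1, z.2.1)
          = (1/2 : ℝ) • ((fhat Φ f) (z.1.1, z.2.1))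
            + (1/2 : ℝ) • ((fhat Φ g) (z.1.1, z.2.1)) := by
        simp only [fhat, inner_add_left, real_inner_smul_left, smul_eq_mul]
        ring
      have hcv := (hL_convex z.1.1 z.1.2 z.2.1 z.2.2).2 (Set.mem_univ
        ((fhat Φ f) (z.1.1, z.2.1))) (Set.mem_univ ((fhat Φ g) (z.1.1, z.2.1)))
        (by norm_num : (0:ℝ) ≤ 1/2) (by norm_num : (0:ℝ) ≤ 1/2) (by norm_num)
      simp only [hℓ, biasLoss]
      rw [hmid]
      simp only [smul_eq_mul] at hcv ⊢
      linarith
    calc ∫ z, ℓ ((1/2 : ℝ) • (f + g)) z ∂(μ.prod μ)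
        ≤ ∫ z, (ℓ f z + ℓ g z) / 2 ∂(μ.prod μ) := by
          refine integral_mono (hint _ _) ?_ hpt
          exact ((hint f _).add (hint g _)).div_const 2
      _ = ((∫ z, ℓ f z ∂(μ.prod μ)) + ∫ z, ℓ g z ∂(μ.prod μ)) / 2 := by
          rw [integral_div, integral_add (hint f _) (hint g _)]
  -- strong convexity at a minimizer
  have hstrong : ∀ (μ : Measure (X × Y)) [IsProbabilityMeasure μ] (f0 : H),
      (∀ g : H, regRisk L Φ μ lam f0 ≤ regRisk L Φ μ lam g) →
      ∀ g : H, lam * ‖f0 - g‖ ^ 2 ≤ 2 * (regRisk L Φ μ lam g - regRisk L Φ μ lam f0) := by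
    intro μ _ f0 hmin g
    have hmid := hmin ((1/2 : ℝ) • (f0 + g))
    have hconv' := hconv f0 g μ
    have hnorm : ‖(1/2 : ℝ) • (f0 + g)‖ ^ 2 = (1/4) * ‖f0 + g‖ ^ 2 := by
      rw [norm_smul, Real.norm_eq_abs]
      rw [abs_of_nonneg (by norm_num : (0:ℝ) ≤ 1/2)]
      ring
    have hpar : ‖f0 + g‖ ^ 2 + ‖f0 - g‖ ^ 2 = 2 * ‖f0‖ ^ 2 + 2 * ‖g‖ ^ 2 := by
      rw [norm_add_sq_real, norm_sub_sq_real]; ring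
    simp only [regRisk] at hmid hmin ⊢
    rw [hnorm] at hmid
    nlinarith [hconv', hmid, hpar, hlam]
  -- the contaminated measure
  set a : ENNReal := ENNReal.ofReal (1 - ε) with ha
  set b : ENNReal := ENNReal.ofReal ε with hb
  set Pε : Measure (X × Y) := a • P + b • Q with hPε
  haveI hPεprob : IsProbabilityMeasure Pε := by
    constructor
    rw [hPε]
    simp only [Measure.coe_add, Pi.add_apply, Measure.smul_apply, smul_eq_mul,
      measure_univ, mul_one]
    rw [ha, hb, ← ENNReal.ofReal_add (by linarith) (by linarith)]
    norm_num
  -- risk decomposition for Pε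
  have haf : a ≠ ⊤ := ENNReal.ofReal_ne_top
  have hbf : b ≠ ⊤ := ENNReal.ofReal_ne_top
  have hprod := bias_prod_mix P Q a b haf hbf
  have hta : a.toReal = 1 - ε := ENNReal.toReal_ofReal (by linarith)
  have htb : b.toReal = ε := ENNReal.toReal_ofReal (by linarith)
  haveI h1 : IsFiniteMeasure ((a*a) • P.prod P) :=
    Measure.smul_finite _ (ENNReal.mul_ne_top haf haf)
  haveI h2 : IsFiniteMeasure ((a*b) • P.prod Q) :=
    Measure.smul_finite _ (ENNReal.mul_ne_top haf hbf)
  haveI h3 : IsFiniteMeasure ((b*a) • Q.prod P) :=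
    Measure.smul_finite _ (ENNReal.mul_ne_top hbf haf)
  haveI h4 : IsFiniteMeasure ((b*b) • Q.prod Q) :=
    Measure.smul_finite _ (ENNReal.mul_ne_top hbf hbf)
  have hSdecomp : ∀ f : H,
      shiftedRisk L Pε (fhat Φ f)
        = (1-ε)*(1-ε) * (∫ z, ℓ f z ∂(P.prod P))
          + (1-ε)*ε * (∫ z, ℓ f z ∂(P.prod Q))
          + ε*(1-ε) * (∫ z, ℓ f z ∂(Q.prod P))
          + ε*ε * (∫ z, ℓ f z ∂(Q.prod Q)) := by
    intro f
    rw [hSR, hprod]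
    rw [integral_add_measure (hint f _) ((hint f _).add_measure ((hint f _).add_measure (hint f _))),
      integral_add_measure (hint f _) ((hint f _).add_measure (hint f _)),
      integral_add_measure (hint f _) (hint f _)]
    rw [integral_smul_measure, integral_smul_measure, integral_smul_measure,
      integral_smul_measure]
    simp only [ENNReal.toReal_mul, hta, htb, smul_eq_mul]
    ring
  -- key strong convexity inequalities
  have key1 := hstrong P fP hfP fPε
  have key2 := hstrong Pε fPε hfPε fP
  rw [norm_sub_rev fPε fP] at key2
  -- unfold into integrals
  have hSP : ∀ f : H, shiftedRisk L P (fhat Φ f) = ∫ z, ℓ f z ∂(P.prod P) := fun f => hSR P f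
  simp only [regRisk] at key1 key2
  rw [hSP fP, hSP fPε] at key1
  rw [hSdecomp fP, hSdecomp fPε] at key2
  -- Lipschitz bounds on each component
  have L1 := hrisk_lip fPε fP (P.prod P)
  have L2 := hrisk_lip fPε fP (P.prod Q)
  have L3 := hrisk_lip fPε fP (Q.prod P)
  have L4 := hrisk_lip fPε fP (Q.prod Q)
  rw [norm_sub_rev fPε fP] at L1 L2 L3 L4
  set d : ℝ := ‖fP - fPε‖ with hd
  have hd0 : 0 ≤ d := norm_nonneg _
  set K : ℝ := c * kb with hK
  have hckb : 0 ≤ K := mul_nonneg hc hkb0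
  set A1 : ℝ := ∫ z, ℓ fPε z ∂(P.prod P) with hA1
  set B1 : ℝ := ∫ z, ℓ fP z ∂(P.prod P) with hB1
  set A2 : ℝ := ∫ z, ℓ fPε z ∂(P.prod Q) with hA2
  set B2 : ℝ := ∫ z, ℓ fP z ∂(P.prod Q) with hB2
  set A3 : ℝ := ∫ z, ℓ fPε z ∂(Q.prod P) with hA3
  set B3 : ℝ := ∫ z, ℓ fP z ∂(Q.prod P) with hB3
  set A4 : ℝ := ∫ z, ℓ fPε z ∂(Q.prod Q) with hA4
  set B4 : ℝ := ∫ z, ℓ fP z ∂(Q.prod Q) with hB4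
  have t1 : A1 - B1 ≤ K * d := (abs_le.mp L1).2
  have t2 : B2 - A2 ≤ K * d := by have := (abs_le.mp L2).1; linarith
  have t3 : B3 - A3 ≤ K * d := by have := (abs_le.mp L3).1; linarith
  have t4 : B4 - A4 ≤ K * d := by have := (abs_le.mp L4).1; linarith
  clear_value A1 B1 A2 B2 A3 B3 A4 B4 K d
  clear hSR hmeas hlipz hzero hbound hint hrisk_lip hconv hstrong hSdecomp hprod hSP
    L1 L2 L3 L4 hfP hfPε hPεprob hL_meas hL_nonneg hL_convex hL_lip hΦ hkb
    hA1 hB1 hA2 hB2 hA3 hB3 hA4 hB4 hd hℓ hta htb haf hbf h1 h2 h3 h4 ha hb hPε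
  have hw1 : (0:ℝ) ≤ 2*ε - ε^2 :=
    by linarith [mul_nonneg hε0.le (show (0:ℝ) ≤ 2 - ε by linarith)]
  have hw2 : (0:ℝ) ≤ (1-ε)*ε := mul_nonneg (by linarith) hε0.le
  have hw3 : (0:ℝ) ≤ ε*(1-ε) := mul_nonneg hε0.le (by linarith)
  have hw4 : (0:ℝ) ≤ ε^2 := sq_nonneg ε
  have m1 : (2*ε - ε^2) * (A1 - B1) ≤ (2*ε - ε^2) * (K * d) :=
    mul_le_mul_of_nonneg_left t1 hw1
  have m2 : ((1-ε)*ε) * (B2 - A2) ≤ ((1-ε)*ε) * (K * d) :=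
    mul_le_mul_of_nonneg_left t2 hw2
  have m3 : (ε*(1-ε)) * (B3 - A3) ≤ (ε*(1-ε)) * (K * d) :=
    mul_le_mul_of_nonneg_left t3 hw3
  have m4 : (ε^2) * (B4 - A4) ≤ (ε^2) * (K * d) :=
    mul_le_mul_of_nonneg_left t4 hw4
  have hmain : lam * d ^ 2 ≤ (4*ε - 2*ε^2) * (K * d) := by
    linarith [key1, key2, m1, m2, m3, m4]
  -- conclude
  have hrhs : (0:ℝ) ≤ 8 / lam * kb * c * ε :=
    mul_nonneg (mul_nonneg (mul_nonneg (div_nonneg (by norm_num) hlam.le) hkb0) hc) hε0.le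
  rcases eq_or_lt_of_le hd0 with h | h
  · rw [← h]; exact hrhs
  · have h1 : lam * d ≤ (4*ε - 2*ε^2) * K := by nlinarith [hmain, h]
    rw [hK] at h1
    rw [div_mul_eq_mul_div, div_mul_eq_mul_div, div_mul_eq_mul_div, le_div_iff₀ hlam]
    have h2 : (4*ε - 2*ε^2) * (c * kb) ≤ 8 * kb * c * ε := by
      linarith [mul_nonneg (mul_nonneg hc hkb0) hε0.le,
        mul_nonneg (mul_nonneg (mul_nonneg hc hkb0) hε0.le) hε0.le]
    linarith [h1, h2]
end

section
/- Under the standing assumptions, fix a Borel probability measure P on X×Y, λ > 0, and f ∈ H, and define the linear map M : H → H by M(g) := 2λ·g + ∫ D₅D₅L(x,y,x',y',f̂(x,x'))·⟪Φ(x,x'), g⟫_H·Φ(x,x') d(P⊗P)(x,y,x',y'). Then M is a bounded (continuous) linear operator on H, satisfies ⟪M(g), g⟫_H ≥ 2λ‖g‖²_H for all g ∈ H, and is bijective (hence invertible with bounded inverse). -/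
open Filter Topology


open MeasureTheory

/- Auxiliary lemmas -/

/-- Derivative of a convex (on univ) differentiable function is monotone. -/
lemma monotone_of_convex_hasDerivAt {f f' : ℝ → ℝ}
    (hc : ConvexOn ℝ Set.univ f) (hd : ∀ t, HasDerivAt f (f' t) t) : Monotone f' := by
  intro s t hst
  rcases eq_or_lt_of_le hst with rfl | hst
  · exact le_refl _
  have h1 : f' s ≤ slope f s t := by
    have htend : Tendsto (slope f s) (𝓝[>] s) (𝓝 (f' s)) :=
      ((hasDerivAt_iff_tendsto_slope.mp (hd s)).mono_left
        (nhdsWithin_mono s fun u hu => ne_of_gt hu))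
    refine le_of_tendsto htend ?_
    filter_upwards [Ioo_mem_nhdsGT_of_mem (Set.left_mem_Ico.mpr hst)] with u hu
    have := hc.secant_mono (Set.mem_univ s) (Set.mem_univ u) (Set.mem_univ t)
      (ne_of_gt hu.1) (ne_of_gt hst) hu.2.le
    simpa [slope_def_field, div_eq_iff] using this
  have h2 : slope f s t ≤ f' t := by
    have htend : Tendsto (slope f t) (𝓝[<] t) (𝓝 (f' t)) :=
      ((hasDerivAt_iff_tendsto_slope.mp (hd t)).mono_left
        (nhdsWithin_mono t fun u hu => ne_of_lt hu))
    refine ge_of_tendsto htend ?_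
    filter_upwards [Ioo_mem_nhdsLT_of_mem (Set.right_mem_Ioc.mpr hst)] with u hu
    have := hc.secant_mono (Set.mem_univ t) (Set.mem_univ s) (Set.mem_univ u)
      (ne_of_lt hst) (ne_of_lt hu.2) hu.1.le
    rw [slope_comm]
    simpa [slope_def_field] using this
  linarith

lemma deriv_nonneg_of_monotone_hasDerivAt {f f' : ℝ → ℝ}
    (hm : Monotone f) (hd : ∀ t, HasDerivAt f (f' t) t) (t : ℝ) : 0 ≤ f' t := by
  have htend : Tendsto (slope f t) (𝓝[≠] t) (𝓝 (f' t)) :=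
    hasDerivAt_iff_tendsto_slope.mp (hd t)
  refine ge_of_tendsto htend ?_
  filter_upwards [self_mem_nhdsWithin] with u hu
  rw [slope_def_field]
  rcases lt_or_gt_of_ne (hu : u ≠ t) with h | h
  · exact div_nonneg_iff.mpr (Or.inr ⟨by linarith [hm h.le], by linarith⟩)
  · exact div_nonneg (by linarith [hm h.le]) (by linarith)

/-- measurability of a pointwise derivative in a parametrized family -/
lemma measurable_param_deriv {α : Type*} [MeasurableSpace α]
    {F F' : α × ℝ → ℝ} (hF : Measurable F)
    (hd : ∀ p : α × ℝ, HasDerivAt (fun t => F (p.1, t)) (F' p) p.2) :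
    Measurable F' := by
  have key : ∀ p : α × ℝ, Tendsto
      (fun n : ℕ => (F (p.1, p.2 + 1 / (n + 1)) - F p) * (n + 1)) atTop (𝓝 (F' p)) := by
    intro p
    have hslope : Tendsto (slope (fun t => F (p.1, t)) p.2) (𝓝[≠] p.2) (𝓝 (F' p)) :=
      hasDerivAt_iff_tendsto_slope.mp (hd p)
    have hseq : Tendsto (fun n : ℕ => p.2 + 1 / (n + 1 : ℝ)) atTop (𝓝[≠] p.2) := by
      apply tendsto_nhdsWithin_of_tendsto_nhds_of_eventually_within
      · simpa using tendsto_const_nhds.add (tendsto_one_div_add_atTop_nhds_zero_nat (𝕜 := ℝ))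
      · filter_upwards with n
        have : (0:ℝ) < 1 / (n + 1) := by positivity
        simp only [Set.mem_compl_iff, Set.mem_singleton_iff]
        intro h; nlinarith [h]
    have := hslope.comp hseq
    convert this using 2 with n
    have hn : (0:ℝ) < 1 / (n + 1) := by positivity
    simp only [Function.comp, slope_def_field]
    rw [Prod.mk.eta, add_sub_cancel_left]
    field_simp
  exact measurable_of_tendsto_metrizable (f := fun n p =>
    (F (p.1, p.2 + 1 / (n + 1)) - F p) * (n + 1))
    (fun n => ((hF.comp (measurable_fst.prodMk (measurable_snd.add_const _))).sub hF).mul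
      measurable_const) (tendsto_pi_nhds.mpr key)

/-- **The operator `M(P)` is bounded, coercive and invertible** (part of Theorem 3.4).
Under the standing assumptions (Polish input space `X`, closed `Y ⊆ ℝ`, Lipschitz convex
twice differentiable loss with bounded derivatives, bounded continuous kernel), for every
probability measure `P`, `λ > 0` and `f ∈ H`, the map
`M(g) = 2λ g + ∫ D₅D₅L(x,y,x',y',f̂(x,x')) ⟪Φ(x,x'), g⟫ Φ(x,x') d(P⊗P)`
is a bounded linear operator on `H` with `⟪M g, g⟫ ≥ 2λ‖g‖²`, and `M` is bijective. -/
theorem operator_M_invertible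
    {X : Type*} [MetricSpace X] [CompleteSpace X] [TopologicalSpace.SeparableSpace X]
    [MeasurableSpace X] [BorelSpace X]
    {H : Type*} [NormedAddCommGroup H] [InnerProductSpace ℝ H] [CompleteSpace H]
    [TopologicalSpace.SeparableSpace H]
    (Y : Set ℝ) (hYclosed : IsClosed Y)
    (L D₅L D₅D₅L : X → Y → X → Y → ℝ → ℝ)
    (hL_meas : Measurable fun p : (X × Y) × (X × Y) × ℝ => L p.1.1 p.1.2 p.2.1.1 p.2.1.2 p.2.2)
    (hL_nonneg : ∀ x y x' y' t, 0 ≤ L x y x' y' t)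
    (hL_convex : ∀ x y x' y', ConvexOn ℝ Set.univ (L x y x' y'))
    (c : ℝ) (hL_lip : ∀ x y x' y' s t, |L x y x' y' t - L x y x' y' s| ≤ c * |t - s|)
    (hD1 : ∀ x y x' y' t, HasDerivAt (L x y x' y') (D₅L x y x' y' t) t)
    (hD2 : ∀ x y x' y' t, HasDerivAt (D₅L x y x' y') (D₅D₅L x y x' y' t) t)
    (hD1cont : ∀ x y x' y', Continuous (D₅L x y x' y'))
    (hD2cont : ∀ x y x' y', Continuous (D₅D₅L x y x' y'))
    (cL1 : ℝ) (hcL1 : 0 < cL1) (hD1bdd : ∀ x y x' y' t, |D₅L x y x' y' t| ≤ cL1)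
    (cL2 : ℝ) (hcL2 : 0 < cL2) (hD2bdd : ∀ x y x' y' t, |D₅D₅L x y x' y' t| ≤ cL2)
    (Φ : X × X → H) (hΦcont : Continuous Φ)
    (kb : ℝ) (hkb : ∀ p : X × X, ‖Φ p‖ ≤ kb)
    (P : Measure (X × Y)) [IsProbabilityMeasure P]
    (lam : ℝ) (hlam : 0 < lam) (f : H) :
    ∃ M : H →L[ℝ] H,
      (∀ g : H, M g = (2 * lam) • g +
        ∫ z : (X × Y) × (X × Y),
          (D₅D₅L z.1.1 z.1.2 z.2.1 z.2.2 (fhat Φ f (z.1.1, z.2.1))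
            * (@inner ℝ H _ (Φ (z.1.1, z.2.1)) g)) • Φ (z.1.1, z.2.1) ∂(P.prod P)) ∧
      (∀ g : H, 2 * lam * ‖g‖ ^ 2 ≤ @inner ℝ H _ (M g) g) ∧
      Function.Bijective M := by
  classical
  have hkb0 : 0 ≤ kb := by
    have hne : Nonempty (X × Y) := by
      by_contra h
      rw [not_nonempty_iff] at h
      have h1 : (P Set.univ) = 1 := measure_univ
      rw [Set.univ_eq_empty_iff.mpr h, measure_empty] at h1
      exact zero_ne_one h1
    obtain ⟨z0⟩ := hne
    exact (norm_nonneg _).trans (hkb (z0.1, z0.1))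
  set μ : Measure ((X × Y) × (X × Y)) := P.prod P with hμdef
  set φ : (X × Y) × (X × Y) → H := fun z => Φ (z.1.1, z.2.1) with hφdef
  set a : (X × Y) × (X × Y) → ℝ :=
    fun z => D₅D₅L z.1.1 z.1.2 z.2.1 z.2.2 (fhat Φ f (z.1.1, z.2.1)) with hadef
  have hφcont : Continuous φ :=
    hΦcont.comp ((continuous_fst.fst).prodMk (continuous_snd.fst))
  -- measurability of a
  have hGmeas : Measurable (fun q : ((X × Y) × (X × Y)) × ℝ =>
      L q.1.1.1 q.1.1.2 q.1.2.1 q.1.2.2 q.2) := by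
    exact hL_meas.comp ((measurable_fst.fst).prodMk
      ((measurable_fst.snd).prodMk measurable_snd))
  have hG1meas : Measurable (fun q : ((X × Y) × (X × Y)) × ℝ =>
      D₅L q.1.1.1 q.1.1.2 q.1.2.1 q.1.2.2 q.2) :=
    measurable_param_deriv hGmeas (fun p => hD1 p.1.1.1 p.1.1.2 p.1.2.1 p.1.2.2 p.2)
  have hG2meas : Measurable (fun q : ((X × Y) × (X × Y)) × ℝ =>
      D₅D₅L q.1.1.1 q.1.1.2 q.1.2.1 q.1.2.2 q.2) :=
    measurable_param_deriv hG1meas (fun p => hD2 p.1.1.1 p.1.1.2 p.1.2.1 p.1.2.2 p.2)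
  have hfhatcont : Continuous (fun z : (X × Y) × (X × Y) => fhat Φ f (z.1.1, z.2.1)) := by
    exact (continuous_const.inner hΦcont).comp
      ((continuous_fst.fst).prodMk (continuous_snd.fst))
  have ha_meas : Measurable a :=
    hG2meas.comp (measurable_id.prodMk hfhatcont.measurable)
  have ha_nonneg : ∀ z, 0 ≤ a z := by
    intro z
    exact deriv_nonneg_of_monotone_hasDerivAt
      (monotone_of_convex_hasDerivAt (hL_convex z.1.1 z.1.2 z.2.1 z.2.2)
        (hD1 z.1.1 z.1.2 z.2.1 z.2.2)) (hD2 z.1.1 z.1.2 z.2.1 z.2.2) _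
  have ha_bdd : ∀ z, |a z| ≤ cL2 := fun z => hD2bdd _ _ _ _ _
  -- the integrand and its integrability
  have hbound : ∀ (g : H) (z : (X × Y) × (X × Y)),
      ‖(a z * @inner ℝ H _ (φ z) g) • φ z‖ ≤ cL2 * kb ^ 2 * ‖g‖ := by
    intro g z
    rw [norm_smul]
    have h1 : ‖a z * @inner ℝ H _ (φ z) g‖ ≤ cL2 * (kb * ‖g‖) := by
      rw [norm_mul]
      have h2 : ‖@inner ℝ H _ (φ z) g‖ ≤ kb * ‖g‖ :=
        (norm_inner_le_norm _ _).trans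
          (mul_le_mul_of_nonneg_right (hkb _) (norm_nonneg _))
      exact mul_le_mul (by simpa [Real.norm_eq_abs] using ha_bdd z) h2 (norm_nonneg _) hcL2.le
    calc ‖a z * @inner ℝ H _ (φ z) g‖ * ‖φ z‖
        ≤ (cL2 * (kb * ‖g‖)) * kb := by
          exact mul_le_mul h1 (hkb _) (norm_nonneg _)
            (by positivity)
      _ = cL2 * kb ^ 2 * ‖g‖ := by ring
  have hint : ∀ g : H, Integrable (fun z => (a z * @inner ℝ H _ (φ z) g) • φ z) μ := by
    intro g
    refine Integrable.mono' (integrable_const (cL2 * kb ^ 2 * ‖g‖)) ?_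
      (Filter.Eventually.of_forall (hbound g))
    exact ((ha_meas.mul (hφcont.inner continuous_const).measurable).aestronglyMeasurable.smul
      hφcont.aestronglyMeasurable)
  -- the linear map
  set T : H →ₗ[ℝ] H :=
    { toFun := fun g => (2 * lam) • g + ∫ z, (a z * @inner ℝ H _ (φ z) g) • φ z ∂μ
      map_add' := by
        intro g h
        have heq : (fun z => (a z * @inner ℝ H _ (φ z) (g + h)) • φ z)
            = fun z => (a z * @inner ℝ H _ (φ z) g) • φ z
              + (a z * @inner ℝ H _ (φ z) h) • φ z := by
          funext z
          rw [inner_add_right, mul_add, add_smul]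
        simp only [heq]
        rw [integral_add (hint g) (hint h), smul_add]
        abel
      map_smul' := by
        intro r g
        have heq : (fun z => (a z * @inner ℝ H _ (φ z) (r • g)) • φ z)
            = fun z => r • ((a z * @inner ℝ H _ (φ z) g) • φ z) := by
          funext z
          rw [real_inner_smul_right, smul_smul]
          ring_nf
        simp only [heq]
        rw [integral_smul, smul_add, smul_smul, smul_smul, RingHom.id_apply]
        ring_nf } with hTdef
  have hTbound : ∀ g, ‖T g‖ ≤ (2 * lam + cL2 * kb ^ 2) * ‖g‖ := by
    intro g
    have h1 : ‖∫ z, (a z * @inner ℝ H _ (φ z) g) • φ z ∂μ‖ ≤ cL2 * kb ^ 2 * ‖g‖ := by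
      have := norm_integral_le_of_norm_le_const (μ := μ)
        (C := cL2 * kb ^ 2 * ‖g‖) (Filter.Eventually.of_forall (hbound g))
      simpa [measure_univ] using this
    calc ‖T g‖ ≤ ‖(2 * lam) • g‖ + ‖∫ z, (a z * @inner ℝ H _ (φ z) g) • φ z ∂μ‖ :=
          norm_add_le _ _
      _ ≤ (2 * lam) * ‖g‖ + cL2 * kb ^ 2 * ‖g‖ := by
          rw [norm_smul]
          gcongr
          simp [abs_of_pos, hlam, le_of_eq, Real.norm_eq_abs,
            abs_of_nonneg (by positivity : (0:ℝ) ≤ 2 * lam)]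
      _ = (2 * lam + cL2 * kb ^ 2) * ‖g‖ := by ring
  set M : H →L[ℝ] H := T.mkContinuous _ hTbound with hMdef
  have hMapp : ∀ g : H, M g = (2 * lam) • g
      + ∫ z, (a z * @inner ℝ H _ (φ z) g) • φ z ∂μ := fun g => rfl
  -- coercivity
  have hcoer : ∀ g : H, 2 * lam * ‖g‖ ^ 2 ≤ @inner ℝ H _ (M g) g := by
    intro g
    have hI : @inner ℝ H _ (∫ z, (a z * @inner ℝ H _ (φ z) g) • φ z ∂μ) g
        = ∫ z, (a z * @inner ℝ H _ (φ z) g) * @inner ℝ H _ (φ z) g ∂μ := by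
      rw [real_inner_comm, ← integral_inner (hint g) g]
      congr 1
      funext z
      rw [real_inner_smul_right, real_inner_comm]
    have hnn : 0 ≤ ∫ z, (a z * @inner ℝ H _ (φ z) g) * @inner ℝ H _ (φ z) g ∂μ := by
      refine integral_nonneg fun z => ?_
      have : (a z * @inner ℝ H _ (φ z) g) * @inner ℝ H _ (φ z) g
          = a z * (@inner ℝ H _ (φ z) g) ^ 2 := by ring
      rw [this]
      exact mul_nonneg (ha_nonneg z) (sq_nonneg _)
    rw [hMapp g, inner_add_left, real_inner_smul_left, real_inner_self_eq_norm_sq, hI]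
    linarith
  -- lower bound for the norm
  have hlow : ∀ g : H, 2 * lam * ‖g‖ ≤ ‖M g‖ := by
    intro g
    rcases eq_or_ne g 0 with rfl | hg
    · simp
    have hgpos : 0 < ‖g‖ := norm_pos_iff.mpr hg
    have h1 : 2 * lam * ‖g‖ ^ 2 ≤ ‖M g‖ * ‖g‖ :=
      (hcoer g).trans (real_inner_le_norm _ _)
    have : 2 * lam * ‖g‖ * ‖g‖ ≤ ‖M g‖ * ‖g‖ := by nlinarith
    exact le_of_mul_le_mul_right this hgpos
  refine ⟨M, fun g => hMapp g, hcoer, ?_, ?_⟩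
  · -- injectivity
    intro g h hgh
    have h0 : M (g - h) = 0 := by rw [map_sub, hgh, sub_self]
    have := hlow (g - h)
    rw [h0, norm_zero] at this
    have : ‖g - h‖ ≤ 0 := by nlinarith
    have : g - h = 0 := norm_le_zero_iff.mp this
    exact sub_eq_zero.mp this
  · -- surjectivity
    have hanti : AntilipschitzWith ⟨(2 * lam)⁻¹, by positivity⟩ M := by
      apply M.antilipschitz_of_bound
      intro x
      have := hlow x
      have h2 : (0:ℝ) < 2 * lam := by positivity
      show ‖x‖ ≤ (2 * lam)⁻¹ * ‖M x‖
      have h3 := mul_le_mul_of_nonneg_left this (inv_nonneg.mpr h2.le)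
      rwa [← mul_assoc, inv_mul_cancel₀ h2.ne', one_mul] at h3
    have hclosed : IsClosed (Set.range M) := hanti.isClosed_range M.uniformContinuous
    set K : Submodule ℝ H := LinearMap.range (M : H →ₗ[ℝ] H) with hK
    have hKclosed : IsClosed (K : Set H) := by
      rw [hK, LinearMap.coe_range]
      exact hclosed
    haveI : CompleteSpace K := hKclosed.completeSpace_coe
    have horth : Kᗮ = ⊥ := by
      rw [Submodule.eq_bot_iff]
      intro h hh
      have h0 : @inner ℝ H _ (M h) h = 0 :=
        (Submodule.mem_orthogonal K h).mp hh (M h) (LinearMap.mem_range_self _ h)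
      have := hcoer h
      rw [h0] at this
      have hn : ‖h‖ ^ 2 ≤ 0 := by nlinarith
      have : ‖h‖ = 0 := by nlinarith [sq_nonneg ‖h‖, norm_nonneg h]
      exact norm_eq_zero.mp this
    have htop : K = ⊤ := by
      rw [← Submodule.orthogonal_orthogonal K, horth, Submodule.bot_orthogonal_eq_top]
    intro v
    have : v ∈ K := htop ▸ Submodule.mem_top
    exact this
end
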